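/- arXiv:1808.08641 — 3 statements merged into one kernel-verified Lean document; each statement's English description precedes it below -/
import Mathlib

section
/- Let B(x,r) denote the spherical cap of geodesic radius r centered at x on the unit sphere S^{d-1} (d ≥ 2), so |B(x,r)| = ω_{d-1} ∫_0^r sin^{d-2}(v) dv where ω_{d-1} is the surface area of S^{d-2}. Then for all 0 < r₂ ≤ r₁ ≤ π and all x₁, x₂ in S^{d-1}, |B(x₁,r₁)|/|B(x₂,r₂)| ≤ (r₁/r₂)^{d-1}. -/
open MeasureTheory

theorem stmt4 (d : ℕ) (hd : 2 ≤ d) (ω : ℝ) (hω : 0 < ω)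
    (x₁ x₂ : EuclideanSpace ℝ (Fin d))
    (hx₁ : x₁ ∈ Metric.sphere (0 : EuclideanSpace ℝ (Fin d)) 1)
    (hx₂ : x₂ ∈ Metric.sphere (0 : EuclideanSpace ℝ (Fin d)) 1)
    (r₁ r₂ : ℝ) (hr₂ : 0 < r₂) (hr₂₁ : r₂ ≤ r₁) (hr₁ : r₁ ≤ Real.pi) :
    (ω * ∫ v in (0:ℝ)..r₁, Real.sin v ^ (d - 2)) /
        (ω * ∫ v in (0:ℝ)..r₂, Real.sin v ^ (d - 2))
      ≤ (r₁ / r₂) ^ (d - 1) := by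
  set n := d - 2 with hn
  have hd1 : d - 1 = n + 1 := by omega
  set c := r₁ / r₂ with hc
  have hc1 : (1:ℝ) ≤ c := (one_le_div hr₂).mpr hr₂₁
  have hc0 : (0:ℝ) < c := lt_of_lt_of_le one_pos hc1
  have hcr : c * r₂ = r₁ := div_mul_cancel₀ _ hr₂.ne'
  have hr₁0 : 0 < r₁ := hr₂.trans_le hr₂₁
  -- pointwise bound
  have key : ∀ u ∈ Set.Icc (0:ℝ) r₂,
      Real.sin (c * u) ^ n ≤ c ^ n * Real.sin u ^ n := by
    intro u hu
    have hu0 : 0 ≤ u := hu.1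
    have hcu : c * u ≤ r₁ := by
      calc c * u ≤ c * r₂ := by nlinarith [hu.2]
        _ = r₁ := hcr
    have hcu0 : 0 ≤ c * u := mul_nonneg hc0.le hu0
    have hsin : Real.sin (c * u) ≤ c * Real.sin u := by
      have hmem : c * u ∈ Set.Icc (0:ℝ) Real.pi := ⟨hcu0, hcu.trans hr₁⟩
      have h0mem : (0:ℝ) ∈ Set.Icc (0:ℝ) Real.pi := ⟨le_rfl, Real.pi_pos.le⟩
      have ha : (0:ℝ) ≤ 1 / c := by positivity
      have hb : (0:ℝ) ≤ 1 - 1 / c := by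
        have : 1 / c ≤ 1 := by
          rw [div_le_one hc0]; exact hc1
        linarith
      have hconc := strictConcaveOn_sin_Icc.concaveOn.2 hmem h0mem ha hb
        (by ring)
      simp only [smul_eq_mul, Real.sin_zero, mul_zero, add_zero] at hconc
      have heq : (1 / c) * (c * u) = u := by field_simp
      rw [heq] at hconc
      calc Real.sin (c * u) = c * ((1 / c) * Real.sin (c * u)) := by
            field_simp
        _ ≤ c * Real.sin u := by
            apply mul_le_mul_of_nonneg_left hconc hc0.le
    have h1 : 0 ≤ Real.sin (c * u) :=
      Real.sin_nonneg_of_nonneg_of_le_pi hcu0 (hcu.trans hr₁)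
    calc Real.sin (c * u) ^ n ≤ (c * Real.sin u) ^ n :=
          pow_le_pow_left₀ h1 hsin n
      _ = c ^ n * Real.sin u ^ n := mul_pow _ _ _
  -- integrability
  have hi1 : IntervalIntegrable (fun u => Real.sin (c * u) ^ n) volume 0 r₂ :=
    (Continuous.pow (Real.continuous_sin.comp (continuous_const.mul continuous_id)) n).intervalIntegrable _ _
  have hi2 : IntervalIntegrable (fun u => c ^ n * Real.sin u ^ n) volume 0 r₂ :=
    (continuous_const.mul (Real.continuous_sin.pow n)).intervalIntegrable _ _
  -- substitution
  have hsub : (∫ v in (0:ℝ)..r₁, Real.sin v ^ n)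
      = c * ∫ u in (0:ℝ)..r₂, Real.sin (c * u) ^ n := by
    have := intervalIntegral.smul_integral_comp_mul_left
      (fun v => Real.sin v ^ n) c (a := 0) (b := r₂)
    rw [mul_zero, hcr] at this
    rw [← this, smul_eq_mul]
  -- positivity of denominator
  have hB : 0 < ∫ v in (0:ℝ)..r₂, Real.sin v ^ n := by
    apply intervalIntegral.intervalIntegral_pos_of_pos_on
      ((Real.continuous_sin.pow n).intervalIntegrable _ _)
      (fun u hu => ?_) hr₂
    exact pow_pos (Real.sin_pos_of_pos_of_lt_pi hu.1 (hu.2.trans_le (hr₂₁.trans hr₁))) n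
  -- main inequality
  have hmain : (∫ v in (0:ℝ)..r₁, Real.sin v ^ n)
      ≤ c ^ (n + 1) * ∫ v in (0:ℝ)..r₂, Real.sin v ^ n := by
    rw [hsub]
    have h2 : (∫ u in (0:ℝ)..r₂, Real.sin (c * u) ^ n)
        ≤ ∫ u in (0:ℝ)..r₂, c ^ n * Real.sin u ^ n :=
      intervalIntegral.integral_mono_on hr₂.le hi1 hi2 key
    rw [intervalIntegral.integral_const_mul] at h2
    calc c * ∫ u in (0:ℝ)..r₂, Real.sin (c * u) ^ n
        ≤ c * (c ^ n * ∫ v in (0:ℝ)..r₂, Real.sin v ^ n) :=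
          mul_le_mul_of_nonneg_left h2 hc0.le
      _ = c ^ (n + 1) * ∫ v in (0:ℝ)..r₂, Real.sin v ^ n := by ring
  rw [hd1, mul_div_mul_left _ _ hω.ne', div_le_iff₀ hB]
  exact hmain
end

section
/- Let 0 < p < ∞ and let Y be a finite collection of spherical caps on S^{d-1}, where each cap B ∈ Y has measure |B| > 0, and assume the caps come in dyadic generations: caps in generation j have radius γ·2^{-j+1} for a fixed 0 < γ < 1 and centers forming a maximal (γ·2^{-j+1})-net of that generation. Then ‖ Σ_{B∈Y} |B|^{-1/p} 𝟙_B ‖_{L^p(S^{d-1})} ≤ c · (#Y)^{1/p}, with c depending only on d and p. -/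
open MeasureTheory ENNReal

/-- Geodesic distance on the unit sphere: `ρ(x,y) = arccos (x · y)`. -/
noncomputable def geodist {d : ℕ} (x y : EuclideanSpace ℝ (Fin d)) : ℝ :=
  Real.arccos (inner ℝ x y : ℝ)

/-- The open spherical cap `B(ζ,r) = {x ∈ S^{d-1} : ρ(ζ,x) < r}`. -/
def cap {d : ℕ} (ζ : EuclideanSpace ℝ (Fin d)) (r : ℝ) : Set (EuclideanSpace ℝ (Fin d)) :=
  {x | x ∈ Metric.sphere (0 : EuclideanSpace ℝ (Fin d)) 1 ∧ geodist ζ x < r}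

/-- The surface measure on the unit sphere: the `(d-1)`-dimensional Hausdorff measure. -/
noncomputable def sphMeasure (d : ℕ) : Measure (EuclideanSpace ℝ (Fin d)) :=
  Measure.hausdorffMeasure ((d : ℝ) - 1)

open NNReal

namespace SC16


variable {d : ℕ}

lemma inner_mem {x y : EuclideanSpace ℝ (Fin d)} (hx : ‖x‖ = 1) (hy : ‖y‖ = 1) :
    -1 ≤ (inner ℝ x y : ℝ) ∧ (inner ℝ x y : ℝ) ≤ 1 := by
  have h := abs_real_inner_le_norm x y
  rw [hx, hy, mul_one] at h
  constructor <;> [linarith [neg_abs_le (inner ℝ x y : ℝ)]; linarith [le_abs_self (inner ℝ x y : ℝ)]]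

lemma geodist_nonneg (x y : EuclideanSpace ℝ (Fin d)) : 0 ≤ geodist x y :=
  Real.arccos_nonneg _

lemma geodist_le_pi (x y : EuclideanSpace ℝ (Fin d)) : geodist x y ≤ Real.pi :=
  Real.arccos_le_pi _

lemma cos_geodist {x y : EuclideanSpace ℝ (Fin d)} (hx : ‖x‖ = 1) (hy : ‖y‖ = 1) :
    Real.cos (geodist x y) = (inner ℝ x y : ℝ) :=
  Real.cos_arccos (inner_mem hx hy).1 (inner_mem hx hy).2

lemma dist_eq_geodist {x y : EuclideanSpace ℝ (Fin d)} (hx : ‖x‖ = 1) (hy : ‖y‖ = 1) :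
    dist x y = 2 * Real.sin (geodist x y / 2) := by
  have h2 : ‖x - y‖ ^ 2 = 2 - 2 * (inner ℝ x y : ℝ) := by
    rw [@norm_sub_sq_real _ _ _ x y, hx, hy]; ring
  have hsin : Real.sin (geodist x y / 2) = Real.sqrt ((1 - Real.cos (geodist x y)) / 2) :=
    Real.sin_half_eq_sqrt (geodist_nonneg x y)
      (le_trans (geodist_le_pi x y) (by linarith [Real.pi_pos]))
  have ht1 : (inner ℝ x y : ℝ) ≤ 1 := (inner_mem hx hy).2
  have hkey : (2 * Real.sqrt ((1 - (inner ℝ x y : ℝ)) / 2)) ^ 2 = 2 - 2 * (inner ℝ x y : ℝ) := by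
    rw [mul_pow, Real.sq_sqrt (by linarith)]; ring
  rw [dist_eq_norm, hsin, cos_geodist hx hy]
  rw [show ‖x - y‖ = Real.sqrt (‖x - y‖ ^ 2) from (Real.sqrt_sq (norm_nonneg _)).symm, h2,
    ← hkey, Real.sqrt_sq (by positivity)]

lemma dist_le_geodist {x y : EuclideanSpace ℝ (Fin d)} (hx : ‖x‖ = 1) (hy : ‖y‖ = 1) :
    dist x y ≤ geodist x y := by
  rw [dist_eq_geodist hx hy]
  have h0 : (0:ℝ) ≤ geodist x y / 2 := by have := geodist_nonneg x y; linarith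
  have := Real.sin_le h0
  linarith

lemma geodist_le_mul_dist {x y : EuclideanSpace ℝ (Fin d)} (hx : ‖x‖ = 1) (hy : ‖y‖ = 1) :
    2 / Real.pi * geodist x y ≤ dist x y := by
  rw [dist_eq_geodist hx hy]
  have h1 : 2 / Real.pi * (geodist x y / 2) ≤ Real.sin (geodist x y / 2) :=
    Real.mul_le_sin (by have := geodist_nonneg x y; linarith) (by linarith [geodist_le_pi x y])
  linarith



lemma packing_bound (d : ℕ) (hd : 1 ≤ d) (x : EuclideanSpace ℝ (Fin d)) {r : ℝ} (hr : 0 < r)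
    (T : Finset (EuclideanSpace ℝ (Fin d)))
    (hclose : ∀ η ∈ T, dist η x < r)
    (hsep : ∀ η₁ ∈ T, ∀ η₂ ∈ T, η₁ ≠ η₂ → 2 / Real.pi * r ≤ dist η₁ η₂) :
    (T.card : ℝ≥0∞) ≤ ENNReal.ofReal ((1 + Real.pi) ^ d) := by
  haveI : Nontrivial (EuclideanSpace ℝ (Fin d)) := by
    refine Module.nontrivial_of_finrank_pos (R := ℝ) ?_
    rw [finrank_euclideanSpace_fin]; omega
  have hπ := Real.pi_pos
  set ρ : ℝ := r / Real.pi with hρdef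
  have hρ : 0 < ρ := by positivity
  -- disjointness
  have hdisj : (↑T : Set (EuclideanSpace ℝ (Fin d))).PairwiseDisjoint
      (fun η => Metric.ball η ρ) := by
    intro η₁ h₁ η₂ h₂ hne
    apply Metric.ball_disjoint_ball
    have := hsep η₁ h₁ η₂ h₂ hne
    have : 2 * ρ ≤ dist η₁ η₂ := by
      rw [hρdef]; rw [div_mul_eq_mul_div] at this
      calc 2 * (r / Real.pi) = 2 * r / Real.pi := by ring
      _ ≤ dist η₁ η₂ := by linarith
    linarith
  have hmeas : ∀ b ∈ T, MeasurableSet (Metric.ball b ρ) :=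
    fun b _ => Metric.isOpen_ball.measurableSet
  have hsub : (⋃ b ∈ T, Metric.ball b ρ) ⊆ Metric.closedBall x (r + ρ) := by
    intro z hz
    simp only [Set.mem_iUnion] at hz
    obtain ⟨b, hb, hzb⟩ := hz
    rw [Metric.mem_closedBall]
    calc dist z x ≤ dist z b + dist b x := dist_triangle _ _ _
    _ ≤ r + ρ := by
        have h1 := Metric.mem_ball.1 hzb
        have h2 := hclose b hb
        linarith
  have hvol : ∑ b ∈ T, volume (Metric.ball b ρ) ≤ volume (Metric.closedBall x (r + ρ)) := by
    rw [← measure_biUnion_finset hdisj hmeas]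
    exact measure_mono hsub
  have hrank : Module.finrank ℝ (EuclideanSpace ℝ (Fin d)) = d := finrank_euclideanSpace_fin
  have hballvol : ∀ b : EuclideanSpace ℝ (Fin d),
      volume (Metric.ball b ρ) = ENNReal.ofReal (ρ ^ d) * volume (Metric.ball (0:EuclideanSpace ℝ (Fin d)) 1) := by
    intro b
    rw [Measure.addHaar_ball volume b hρ.le, hrank]
  have hcbvol : volume (Metric.closedBall x (r + ρ))
      = ENNReal.ofReal ((1 + Real.pi) ^ d) * (ENNReal.ofReal (ρ ^ d) * volume (Metric.ball (0:EuclideanSpace ℝ (Fin d)) 1)) := by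
    rw [Measure.addHaar_closedBall volume x (by positivity), hrank]
    rw [← mul_assoc, ← ENNReal.ofReal_mul (by positivity)]
    congr 2
    rw [← mul_pow]
    congr 1
    rw [hρdef]; field_simp; ring
  rw [Finset.sum_congr rfl (fun b _ => hballvol b), Finset.sum_const, nsmul_eq_mul, hcbvol] at hvol
  have hv0 : ENNReal.ofReal (ρ ^ d) * volume (Metric.ball (0:EuclideanSpace ℝ (Fin d)) 1) ≠ 0 := by
    apply mul_ne_zero
    · simp [ENNReal.ofReal_eq_zero]; positivity
    · exact (Metric.measure_ball_pos volume _ one_pos).ne'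
  have hvtop : ENNReal.ofReal (ρ ^ d) * volume (Metric.ball (0:EuclideanSpace ℝ (Fin d)) 1) ≠ ⊤ := by
    exact ENNReal.mul_ne_top ENNReal.ofReal_ne_top measure_ball_lt_top.ne
  exact (ENNReal.mul_le_mul_iff_left hv0 hvtop).1 hvol



lemma hMnat (n : ℕ) : μH[(n:ℝ)] = (volume : Measure (Fin n → ℝ)) := by
  have := hausdorffMeasure_pi_real (ι := Fin n)
  rwa [Fintype.card_fin] at this

lemma equiv_lipschitz (n : ℕ) :
    LipschitzWith 1 (WithLp.equiv 2 (Fin n → ℝ)) := PiLp.lipschitzWith_ofLp 2 _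

lemma equiv_antilipschitz (n : ℕ) :
    AntilipschitzWith ((n : ℝ≥0) ^ ((1:ℝ)/2)) (WithLp.equiv 2 (Fin n → ℝ)) := by
  have := PiLp.antilipschitzWith_ofLp 2 (fun _ : Fin n => ℝ)
  rw [show ⇑(WithLp.equiv 2 (Fin n → ℝ)) = WithLp.ofLp from rfl]
  simpa [ENNReal.toReal_div, Fintype.card_fin] using this

lemma hball_lower (n : ℕ) (hn : 1 ≤ n) {s : ℝ} (hs : 0 < s) :
    ENNReal.ofReal ((s / n) ^ n) ≤ μH[(n:ℝ)] (Metric.closedBall (0 : EuclideanSpace ℝ (Fin n)) s) := by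
  set e := WithLp.equiv 2 (Fin n → ℝ)
  have hcoe : ((((n : ℝ≥0) ^ ((1:ℝ)/2)) : ℝ≥0) : ℝ) ≤ (n:ℝ) := by
    rw [NNReal.coe_rpow, NNReal.coe_natCast]
    calc (n:ℝ) ^ ((1:ℝ)/2) ≤ (n:ℝ) ^ (1:ℝ) :=
      Real.rpow_le_rpow_of_exponent_le (by exact_mod_cast hn) (by norm_num)
    _ = n := Real.rpow_one _
  -- the sup-norm ball of radius s/n is inside the image of the euclidean ball
  have hsub : Metric.closedBall (0 : Fin n → ℝ) (s / n)
      ⊆ e '' Metric.closedBall (0 : EuclideanSpace ℝ (Fin n)) s := by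
    intro y hy
    refine ⟨e.symm y, ?_, by simp⟩
    rw [Metric.mem_closedBall] at hy ⊢
    have h := (equiv_antilipschitz n).le_mul_dist (e.symm y) 0
    have he0 : e (e.symm y) = y := by simp
    have hez : e (0 : EuclideanSpace ℝ (Fin n)) = 0 := rfl
    rw [he0, hez] at h
    calc dist (e.symm y) (0 : EuclideanSpace ℝ (Fin n))
        ≤ ((((n : ℝ≥0) ^ ((1:ℝ)/2)) : ℝ≥0) : ℝ) * dist y 0 := h
      _ ≤ (n : ℝ) * (s / n) := by
          apply mul_le_mul hcoe hy dist_nonneg (Nat.cast_nonneg n)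
      _ = s := by field_simp
  have h1 : volume (Metric.closedBall (0 : Fin n → ℝ) (s / n))
      ≤ μH[(n:ℝ)] (Metric.closedBall (0 : EuclideanSpace ℝ (Fin n)) s) := by
    rw [← hMnat n]
    calc μH[(n:ℝ)] (Metric.closedBall (0 : Fin n → ℝ) (s / n))
        ≤ μH[(n:ℝ)] (e '' Metric.closedBall (0 : EuclideanSpace ℝ (Fin n)) s) :=
          measure_mono hsub
      _ ≤ (1:ℝ≥0∞) ^ (n:ℝ) * μH[(n:ℝ)] (Metric.closedBall (0 : EuclideanSpace ℝ (Fin n)) s) :=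
          (equiv_lipschitz n).hausdorffMeasure_image_le (by positivity) _
      _ = _ := by simp
  refine le_trans ?_ h1
  rw [Real.volume_pi_closedBall 0 (by positivity), Fintype.card_fin]
  apply ENNReal.ofReal_le_ofReal
  apply pow_le_pow_left₀ (by positivity)
  have : (0:ℝ) < n := by exact_mod_cast hn
  have h2 : 0 < s / (n:ℝ) := div_pos hs this
  linarith

lemma hball_upper (n : ℕ) (hn : 1 ≤ n) {s : ℝ} (hs : 0 ≤ s) :
    μH[(n:ℝ)] (Metric.closedBall (0 : EuclideanSpace ℝ (Fin n)) s)
      ≤ ENNReal.ofReal ((n:ℝ) ^ n * (2 * s) ^ n) := by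
  set e := WithLp.equiv 2 (Fin n → ℝ)
  have hlip : LipschitzWith ((n : ℝ≥0) ^ ((1:ℝ)/2)) (e.symm) :=
    (equiv_antilipschitz n).to_rightInverse (fun y => e.apply_symm_apply y)
  have hsub : Metric.closedBall (0 : EuclideanSpace ℝ (Fin n)) s
      ⊆ e.symm '' Metric.closedBall (0 : Fin n → ℝ) s := by
    intro x hx
    refine ⟨e x, ?_, by simp⟩
    rw [Metric.mem_closedBall] at hx ⊢
    have h := (equiv_lipschitz n).dist_le_mul x 0
    have hez : e (0 : EuclideanSpace ℝ (Fin n)) = 0 := rfl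
    rw [hez] at h
    calc dist (e x) (0 : Fin n → ℝ) ≤ 1 * dist x 0 := h
      _ ≤ s := by rw [one_mul]; exact hx
  calc μH[(n:ℝ)] (Metric.closedBall (0 : EuclideanSpace ℝ (Fin n)) s)
      ≤ μH[(n:ℝ)] (e.symm '' Metric.closedBall (0 : Fin n → ℝ) s) := measure_mono hsub
    _ ≤ (((n : ℝ≥0) ^ ((1:ℝ)/2) : ℝ≥0) : ℝ≥0∞) ^ (n:ℝ)
          * μH[(n:ℝ)] (Metric.closedBall (0 : Fin n → ℝ) s) :=
        hlip.hausdorffMeasure_image_le (by positivity) _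
    _ ≤ ENNReal.ofReal ((n:ℝ) ^ n) * ENNReal.ofReal ((2*s) ^ n) := by
        apply mul_le_mul' ?_ ?_
        · calc (((n : ℝ≥0) ^ ((1:ℝ)/2) : ℝ≥0) : ℝ≥0∞) ^ (n:ℝ)
              ≤ ((n : ℝ≥0∞)) ^ (n:ℝ) := by
                apply ENNReal.rpow_le_rpow ?_ (by positivity)
                rw [← ENNReal.coe_natCast]
                refine ENNReal.coe_le_coe.2 ?_
                have h1 : ((n:ℝ≥0)) ^ ((1:ℝ)/2) ≤ ((n:ℝ≥0)) ^ ((1:ℝ)) :=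
                  NNReal.rpow_le_rpow_of_exponent_le (by exact_mod_cast hn) (by norm_num)
                simpa using h1
          _ = ENNReal.ofReal ((n:ℝ) ^ n) := by
                rw [ENNReal.rpow_natCast, ENNReal.ofReal_pow (Nat.cast_nonneg n)]
                congr 1
                simp [ENNReal.ofReal_natCast]
        · rw [hMnat n, Real.volume_pi_closedBall 0 hs, Fintype.card_fin]
    _ = ENNReal.ofReal ((n:ℝ) ^ n * (2 * s) ^ n) := by
        rw [← ENNReal.ofReal_mul (by positivity)]




set_option maxHeartbeats 1000000 in
lemma cap_lower {d : ℕ} (hd : 2 ≤ d) {ζ : EuclideanSpace ℝ (Fin d)} (hζ : ‖ζ‖ = 1)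
    {r : ℝ} (hr : 0 < r) (hr2 : r ≤ 2) :
    ENNReal.ofReal ((r / (4 * d)) ^ (d - 1)) ≤ sphMeasure d (cap ζ r) := by
  have hπ := Real.pi_pos
  have hπ4 := Real.pi_le_four
  have hζ0 : ζ ≠ 0 := by intro h; rw [h, norm_zero] at hζ; norm_num at hζ
  set K := (Submodule.span ℝ {ζ})ᗮ with hKdef
  haveI : Fact (Module.finrank ℝ (EuclideanSpace ℝ (Fin d)) = (d-1)+1) :=
    ⟨by rw [finrank_euclideanSpace_fin]; omega⟩
  have hK : Module.finrank ℝ K = d - 1 := Submodule.finrank_orthogonal_span_singleton hζ0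
  set BK := (stdOrthonormalBasis ℝ K).reindex (finCongr hK) with hBKdef
  set φ : EuclideanSpace ℝ (Fin d) → EuclideanSpace ℝ (Fin (d-1)) :=
    fun x => BK.repr (K.orthogonalProjectionOnto x) with hφdef
  -- φ is 1-Lipschitz
  have hPlip : LipschitzWith 1 (fun x => (K.orthogonalProjectionOnto x : K)) := by
    have h1 := (K.orthogonalProjectionOnto).lipschitz
    refine h1.weaken ?_
    have := K.orthogonalProjectionOnto_norm_le
    exact_mod_cast this
  have hφlip : LipschitzWith 1 φ := by
    have := (BK.repr.isometry.lipschitz).comp hPlip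
    rw [mul_one] at this
    exact this
  -- parameters
  set ρ₀ : ℝ := min r (Real.pi/2) with hρ₀def
  have hρ₀pos : 0 < ρ₀ := lt_min hr (by positivity)
  have hρ₀le : ρ₀ ≤ Real.pi/2 := min_le_right _ _
  have hsρ₀ : 0 < Real.sin ρ₀ := Real.sin_pos_of_pos_of_lt_pi hρ₀pos (by linarith)
  have hcosρ₀ : 0 ≤ Real.cos ρ₀ := Real.cos_nonneg_of_mem_Icc ⟨by linarith, hρ₀le⟩
  set s' : ℝ := Real.sin ρ₀ / 2 with hs'def
  have hs'pos : 0 < s' := by positivity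
  have hs'le : s' ≤ 1/2 := by
    have := Real.sin_le_one ρ₀; rw [hs'def]; linarith
  -- the closed ball of radius s' is inside φ '' cap
  have hsub : Metric.closedBall (0 : EuclideanSpace ℝ (Fin (d-1))) s' ⊆ φ '' (cap ζ r) := by
    intro w hw
    rw [Metric.mem_closedBall, dist_zero_right] at hw
    set y : K := BK.repr.symm w with hydef
    have hyn : ‖(y : EuclideanSpace ℝ (Fin d))‖ = ‖w‖ := by
      rw [Submodule.norm_coe, hydef, LinearIsometryEquiv.norm_map]
    have hyζ : (inner ℝ ζ (y : EuclideanSpace ℝ (Fin d)) : ℝ) = 0 := by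
      have hmem : (y : EuclideanSpace ℝ (Fin d)) ∈ (Submodule.span ℝ {ζ})ᗮ := y.2
      exact (Submodule.mem_orthogonal _ _).1 hmem ζ (Submodule.mem_span_singleton_self ζ)
    set a : ℝ := Real.sqrt (1 - ‖w‖^2) with hadef
    have hw1 : ‖w‖ ≤ 1/2 := le_trans hw hs'le
    have h1w : (0:ℝ) ≤ 1 - ‖w‖^2 := by nlinarith [norm_nonneg w]
    have ha0 : 0 ≤ a := Real.sqrt_nonneg _
    have ha2 : a^2 = 1 - ‖w‖^2 := Real.sq_sqrt h1w
    have ha1 : a ≤ 1 := by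
      rw [hadef]; refine Real.sqrt_le_one.2 ?_; nlinarith [norm_nonneg w]
    set x : EuclideanSpace ℝ (Fin d) := a • ζ + (y : EuclideanSpace ℝ (Fin d)) with hxdef
    have hinner : (inner ℝ ζ x : ℝ) = a := by
      rw [hxdef, inner_add_right, real_inner_smul_right, hyζ, real_inner_self_eq_norm_sq, hζ]
      ring
    have hx1 : ‖x‖ = 1 := by
      have hnx : ‖x‖^2 = 1 := by
        rw [hxdef, norm_add_sq_real, real_inner_smul_left, hyζ, norm_smul, hζ]
        simp only [mul_zero, mul_one]
        rw [hyn]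
        have : |a| = a := abs_of_nonneg ha0
        rw [Real.norm_eq_abs, this]
        nlinarith
      calc ‖x‖ = Real.sqrt (‖x‖^2) := (Real.sqrt_sq (norm_nonneg _)).symm
        _ = 1 := by rw [hnx, Real.sqrt_one]
    -- geodist ζ x < r
    have hgeo : geodist ζ x < r := by
      have hwlt : ‖w‖ < Real.sin ρ₀ := by
        calc ‖w‖ ≤ s' := hw
        _ < Real.sin ρ₀ := by rw [hs'def]; linarith
      have hgt : Real.cos ρ₀ < a := by
        have h1 : Real.cos ρ₀ ^ 2 = 1 - Real.sin ρ₀ ^2 := by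
          nlinarith [Real.sin_sq_add_cos_sq ρ₀]
        have h2 : Real.cos ρ₀ ^ 2 < a ^ 2 := by
          rw [h1, ha2]
          have : ‖w‖^2 < Real.sin ρ₀ ^2 := by nlinarith [norm_nonneg w]
          linarith
        exact lt_of_pow_lt_pow_left₀ 2 ha0 h2
      have harc : Real.arccos a < Real.arccos (Real.cos ρ₀) :=
        Real.strictAntiOn_arccos ⟨by linarith [Real.neg_one_le_cos ρ₀], by linarith [Real.cos_le_one ρ₀]⟩
          ⟨by linarith, ha1⟩ hgt
      rw [Real.arccos_cos (by linarith) (by linarith)] at harc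
      calc geodist ζ x = Real.arccos a := by rw [geodist, hinner]
        _ < ρ₀ := harc
        _ ≤ r := min_le_left _ _
    have hxcap : x ∈ cap ζ r := ⟨mem_sphere_zero_iff_norm.2 hx1, hgeo⟩
    refine ⟨x, hxcap, ?_⟩
    -- φ x = w
    have hPζ : K.orthogonalProjectionOnto ζ = 0 := by
      apply Submodule.orthogonalProjectionOnto_apply_of_mem_orthogonal
      rw [hKdef, Submodule.orthogonal_orthogonal]
      exact Submodule.mem_span_singleton_self ζ
    have hPx : K.orthogonalProjectionOnto x = y := by
      have h1 : K.orthogonalProjectionOnto (a • ζ) = 0 := by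
        rw [ContinuousLinearMap.map_smul, hPζ, smul_zero]
      rw [hxdef, map_add, h1, zero_add, Submodule.orthogonalProjectionOnto_mem_subspace_eq_self]
    rw [hφdef]
    simp only [hPx, hydef]
    exact BK.repr.apply_symm_apply w
  -- measure chain
  have hexp : ((d:ℝ) - 1) = (((d-1:ℕ)) : ℝ) := by
    have : (1:ℝ) ≤ (d:ℝ) := by exact_mod_cast le_trans (by norm_num) hd
    push_cast [Nat.cast_sub (by omega : 1 ≤ d)]
    ring
  have hchain : μH[((d-1:ℕ):ℝ)] (Metric.closedBall (0 : EuclideanSpace ℝ (Fin (d-1))) s')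
      ≤ sphMeasure d (cap ζ r) := by
    calc μH[((d-1:ℕ):ℝ)] (Metric.closedBall (0 : EuclideanSpace ℝ (Fin (d-1))) s')
        ≤ μH[((d-1:ℕ):ℝ)] (φ '' (cap ζ r)) := measure_mono hsub
      _ ≤ (1:ℝ≥0∞) ^ (((d-1:ℕ)):ℝ) * μH[((d-1:ℕ):ℝ)] (cap ζ r) :=
          hφlip.hausdorffMeasure_image_le (by positivity) _
      _ = μH[((d-1:ℕ):ℝ)] (cap ζ r) := by simp
      _ = sphMeasure d (cap ζ r) := by rw [sphMeasure, hexp]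
  refine le_trans ?_ (le_trans (hball_lower (d-1) (by omega) hs'pos) hchain)
  apply ENNReal.ofReal_le_ofReal
  apply pow_le_pow_left₀ (by positivity)
  -- r/(4d) ≤ s'/(d-1)
  have hs'r : r / 4 ≤ s' := by
    rw [hs'def]
    have hsin : 2/Real.pi * ρ₀ ≤ Real.sin ρ₀ := Real.mul_le_sin (le_of_lt hρ₀pos) hρ₀le
    rcases le_or_gt r (Real.pi/2) with h | h
    · have hre : ρ₀ = r := min_eq_left h
      rw [hre] at hsin
      have h24 : r / 2 ≤ Real.sin r := by
        calc r/2 = (2/4) * r := by ring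
        _ ≤ 2/Real.pi * r := by
            apply mul_le_mul_of_nonneg_right _ hr.le
            rw [div_le_div_iff₀ (by norm_num) hπ]; linarith
        _ ≤ Real.sin r := hsin
      rw [hre]; linarith
    · have hρ₀eq : ρ₀ = Real.pi/2 := min_eq_right h.le
      rw [hρ₀eq, Real.sin_pi_div_two]; linarith
  have hd1 : (0:ℝ) < (d:ℝ) - 1 := by
    have : (2:ℝ) ≤ (d:ℝ) := by exact_mod_cast hd
    linarith
  have hcast : ((d-1:ℕ):ℝ) = (d:ℝ) - 1 := by rw [← hexp]
  rw [hcast]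
  rw [div_le_div_iff₀ (by positivity) hd1]
  have h4 : r * ((d:ℝ)-1) ≤ r * (4 * d) * (1/4) := by
    have : (2:ℝ) ≤ (d:ℝ) := by exact_mod_cast hd
    nlinarith
  nlinarith [hs'pos, hr, hd1, hs'r, mul_le_mul_of_nonneg_left hs'r (by positivity : (0:ℝ) ≤ 4*(d:ℝ))]






/-- threshold angle -/
noncomputable def Rd (d : ℕ) : ℝ := Real.arccos (1 / (2 * Real.sqrt d))

lemma td_pos {d : ℕ} (hd : 2 ≤ d) : 0 < 1 / (2 * Real.sqrt d) := by
  have : (0:ℝ) < Real.sqrt d := Real.sqrt_pos.2 (by exact_mod_cast (by omega : 0 < d))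
  positivity

lemma td_le_half {d : ℕ} (hd : 2 ≤ d) : 1 / (2 * Real.sqrt d) ≤ 1/2 := by
  have h1 : (1:ℝ) ≤ Real.sqrt d := by
    rw [show (1:ℝ) = Real.sqrt 1 by simp]
    exact Real.sqrt_le_sqrt (by exact_mod_cast le_trans one_le_two hd)
  rw [div_le_div_iff₀ (by linarith) (by norm_num)]
  linarith

lemma Rd_pos {d : ℕ} (hd : 2 ≤ d) : 0 < Rd d :=
  Real.arccos_pos.2 (by linarith [td_le_half hd])

lemma Rd_lt_pi_div_two {d : ℕ} (hd : 2 ≤ d) : Rd d < Real.pi / 2 :=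
  Real.arccos_lt_pi_div_two.2 (td_pos hd)

lemma cos_Rd {d : ℕ} (hd : 2 ≤ d) : Real.cos (Rd d) = 1 / (2 * Real.sqrt d) :=
  Real.cos_arccos (by linarith [td_pos hd]) (by linarith [td_le_half hd])

set_option maxHeartbeats 1000000 in
lemma cap_upper_small {d : ℕ} (hd : 2 ≤ d) {ζ : EuclideanSpace ℝ (Fin d)} (hζ : ‖ζ‖ = 1)
    {r : ℝ} (hr : 0 < r) (hrR : r ≤ Rd d) :
    sphMeasure d (cap ζ r)
      ≤ ENNReal.ofReal ((4*Real.sqrt d)^(d-1) * (((d-1:ℕ):ℝ)^(d-1) * (2 * Real.sin r)^(d-1))) := by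
  have hπ := Real.pi_pos
  have hζ0 : ζ ≠ 0 := by intro h; rw [h, norm_zero] at hζ; norm_num at hζ
  have hdR : (0:ℝ) < Real.sqrt d := Real.sqrt_pos.2 (by exact_mod_cast (by omega : 0 < d))
  set t : ℝ := 1 / (2 * Real.sqrt d) with htdef
  have ht0 : 0 < t := td_pos hd
  have ht2 : t ≤ 1/2 := td_le_half hd
  set K := (Submodule.span ℝ {ζ})ᗮ with hKdef
  haveI : Fact (Module.finrank ℝ (EuclideanSpace ℝ (Fin d)) = (d-1)+1) :=
    ⟨by rw [finrank_euclideanSpace_fin]; omega⟩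
  have hK : Module.finrank ℝ K = d - 1 := Submodule.finrank_orthogonal_span_singleton hζ0
  set BK := (stdOrthonormalBasis ℝ K).reindex (finCongr hK) with hBKdef
  set G : EuclideanSpace ℝ (Fin (d-1)) → EuclideanSpace ℝ (Fin d) :=
    fun w => Real.sqrt (1 - ‖w‖^2) • ζ + ((BK.repr.symm w : K) : EuclideanSpace ℝ (Fin d)) with hGdef
  have hRd2 : Rd d ≤ Real.pi / 2 := (Rd_lt_pi_div_two hd).le
  set S : ℝ := Real.sin (Rd d) with hSdef
  have hS1 : S ≤ 1 := Real.sin_le_one _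
  have hsinr0 : 0 ≤ Real.sin r := Real.sin_nonneg_of_nonneg_of_le_pi hr.le (by linarith)
  have hsinrS : Real.sin r ≤ S := by
    rw [hSdef]
    exact Real.sin_le_sin_of_le_of_le_pi_div_two (by linarith) hRd2 hrR
  have hS2 : S^2 = 1 - t^2 := by
    have hc : Real.cos (Rd d) = t := cos_Rd hd
    rw [hSdef]
    nlinarith [Real.sin_sq_add_cos_sq (Rd d)]
  -- membership in K gives orthogonality to ζ
  have horth : ∀ z : K, (inner ℝ ζ ((z : EuclideanSpace ℝ (Fin d))) : ℝ) = 0 := by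
    intro z
    have hmem : (z : EuclideanSpace ℝ (Fin d)) ∈ (Submodule.span ℝ {ζ})ᗮ := z.2
    exact (Submodule.mem_orthogonal _ _).1 hmem ζ (Submodule.mem_span_singleton_self ζ)
  -- a-values
  have hlower : ∀ w : EuclideanSpace ℝ (Fin (d-1)), ‖w‖ ≤ S → t ≤ Real.sqrt (1 - ‖w‖^2) := by
    intro w hw
    have h1 : t^2 ≤ 1 - ‖w‖^2 := by nlinarith [norm_nonneg w]
    calc t = Real.sqrt (t^2) := by rw [Real.sqrt_sq ht0.le]
      _ ≤ _ := Real.sqrt_le_sqrt h1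
  -- G is Lipschitz on the ball of radius sin r
  have hGlip : LipschitzOnWith (Real.toNNReal (4*Real.sqrt d)) G
      (Metric.closedBall (0 : EuclideanSpace ℝ (Fin (d-1))) (Real.sin r)) := by
    apply LipschitzOnWith.of_dist_le_mul
    intro w hw v hv
    rw [Metric.mem_closedBall, dist_zero_right] at hw hv
    have hwS : ‖w‖ ≤ S := le_trans hw hsinrS
    have hvS : ‖v‖ ≤ S := le_trans hv hsinrS
    set aw := Real.sqrt (1 - ‖w‖^2) with hawdef
    set av := Real.sqrt (1 - ‖v‖^2) with havdef
    have haw0 : t ≤ aw := hlower w hwS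
    have hav0 : t ≤ av := hlower v hvS
    have haw2 : aw^2 = 1 - ‖w‖^2 := Real.sq_sqrt (by nlinarith [norm_nonneg w])
    have hav2 : av^2 = 1 - ‖v‖^2 := Real.sq_sqrt (by nlinarith [norm_nonneg v])
    have hdiff : |aw - av| * (2*t) ≤ 2 * ‖w - v‖ := by
      have h1 : |aw - av| * (aw + av) = |‖v‖^2 - ‖w‖^2| := by
        rw [← abs_of_nonneg (by linarith : (0:ℝ) ≤ aw + av), ← abs_mul]
        congr 1; nlinarith
      have h2 : |‖v‖^2 - ‖w‖^2| ≤ (‖v‖ + ‖w‖) * |‖v‖ - ‖w‖| := by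
        rw [show ‖v‖^2 - ‖w‖^2 = (‖v‖ + ‖w‖) * (‖v‖ - ‖w‖) by ring, abs_mul,
          abs_of_nonneg (by positivity : (0:ℝ) ≤ ‖v‖ + ‖w‖)]
      have h3 : |‖v‖ - ‖w‖| ≤ ‖w - v‖ := by
        rw [abs_sub_comm]
        have := abs_norm_sub_norm_le w v
        linarith [this]
      have h4 : ‖v‖ + ‖w‖ ≤ 2 := by linarith [le_trans hwS hS1, le_trans hvS hS1]
      calc |aw - av| * (2*t) ≤ |aw - av| * (aw + av) := by
            apply mul_le_mul_of_nonneg_left (by linarith) (abs_nonneg _)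
        _ = |‖v‖^2 - ‖w‖^2| := h1
        _ ≤ (‖v‖ + ‖w‖) * |‖v‖ - ‖w‖| := h2
        _ ≤ 2 * ‖w - v‖ := by
            apply mul_le_mul h4 h3 (abs_nonneg _) (by norm_num)
    -- compute the distance
    have hsub : G w - G v = (aw - av) • ζ
        + (((BK.repr.symm (w - v) : K)) : EuclideanSpace ℝ (Fin d)) := by
      rw [hGdef]
      simp only [map_sub]
      push_cast
      rw [sub_smul]
      abel
    have hnn : ‖((BK.repr.symm (w - v) : K) : EuclideanSpace ℝ (Fin d))‖ = ‖w - v‖ := by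
      rw [Submodule.norm_coe, LinearIsometryEquiv.norm_map]
    have hGd : dist (G w) (G v)^2 = (aw - av)^2 + ‖w - v‖^2 := by
      rw [dist_eq_norm, hsub, norm_add_sq_real, real_inner_smul_left, horth, norm_smul, hζ,
        hnn, Real.norm_eq_abs]
      simp only [mul_zero, mul_one, add_zero, sq_abs]
    have hfinal : dist (G w) (G v)^2 ≤ (4*Real.sqrt d)^2 * dist w v ^2 := by
      rw [hGd, dist_eq_norm]
      have h5 : (aw - av)^2 ≤ (1/t)^2 * ‖w - v‖^2 := by
        have h6 : |aw - av| ≤ (1/t) * ‖w - v‖ := by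
          rw [div_mul_eq_mul_div, le_div_iff₀ ht0]
          calc |aw-av| * t = |aw - av| * (2*t) / 2 := by ring
            _ ≤ 2 * ‖w-v‖ / 2 := by linarith
            _ = 1 * ‖w - v‖ := by ring
        calc (aw - av)^2 = |aw - av|^2 := (sq_abs _).symm
          _ ≤ ((1/t) * ‖w - v‖)^2 := by
              apply pow_le_pow_left₀ (abs_nonneg _) h6
          _ = (1/t)^2 * ‖w-v‖^2 := by ring
      have h7 : (1/t)^2 + 1 ≤ (4*Real.sqrt d)^2 := by
        have : (1/t) = 2 * Real.sqrt d := by rw [htdef]; field_simp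
        rw [this]
        have hsq : Real.sqrt d ^2 = d := Real.sq_sqrt (Nat.cast_nonneg d)
        have hd1 : (1:ℝ) ≤ (d:ℝ) := by exact_mod_cast le_trans one_le_two hd
        nlinarith
      nlinarith [norm_nonneg (w - v), sq_nonneg (aw - av)]
    have h8 : (0:ℝ) ≤ 4*Real.sqrt d := by positivity
    rw [Real.coe_toNNReal _ h8]
    have h9 : (0:ℝ) ≤ (4*Real.sqrt d) * dist w v := by positivity
    calc dist (G w) (G v) = Real.sqrt (dist (G w) (G v)^2) :=
          (Real.sqrt_sq dist_nonneg).symm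
      _ ≤ Real.sqrt (((4*Real.sqrt d) * dist w v)^2) :=
          Real.sqrt_le_sqrt (by rw [mul_pow]; exact hfinal)
      _ = (4*Real.sqrt d) * dist w v := Real.sqrt_sq h9
  -- cap is contained in the image of the ball
  have hcap : cap ζ r ⊆ G '' (Metric.closedBall (0 : EuclideanSpace ℝ (Fin (d-1))) (Real.sin r)) := by
    rintro x ⟨hxS, hxg⟩
    have hx1 : ‖x‖ = 1 := mem_sphere_zero_iff_norm.1 hxS
    set c : ℝ := (inner ℝ ζ x : ℝ) with hcdef
    have hcos : Real.cos (geodist ζ x) = c := cos_geodist hζ hx1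
    have hg0 : 0 ≤ geodist ζ x := geodist_nonneg ζ x
    have hct : t < c := by
      have h1 : Real.cos (Rd d) < Real.cos (geodist ζ x) := by
        apply Real.cos_lt_cos_of_nonneg_of_le_pi hg0 (by linarith) (by linarith)
      rw [hcos, cos_Rd hd, ← htdef] at h1
      exact h1
    have hc1 : c ≤ 1 := (inner_mem hζ hx1).2
    set y : EuclideanSpace ℝ (Fin d) := x - c • ζ with hydef
    have hyζ : (inner ℝ ζ y : ℝ) = 0 := by
      rw [hydef, inner_sub_right, real_inner_smul_right, real_inner_self_eq_norm_sq, hζ]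
      ring
    have hyK : y ∈ K := by
      rw [hKdef, Submodule.mem_orthogonal]
      intro u hu
      obtain ⟨s, rfl⟩ := Submodule.mem_span_singleton.1 hu
      rw [real_inner_smul_left, hyζ, mul_zero]
    have hyn2 : ‖y‖^2 = 1 - c^2 := by
      rw [hydef, norm_sub_sq_real, real_inner_smul_right, real_inner_comm, hcdef, norm_smul,
        Real.norm_eq_abs, hζ, hx1]
      simp only [mul_one, one_pow, sq_abs]
      ring
    have hsiny : ‖y‖ = Real.sin (geodist ζ x) := by
      rw [geodist, ← hcdef, Real.sin_arccos]
      rw [show ‖y‖ = Real.sqrt (‖y‖^2) from (Real.sqrt_sq (norm_nonneg y)).symm, hyn2]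
    have hsinle : ‖y‖ ≤ Real.sin r := by
      rw [hsiny]
      exact Real.sin_le_sin_of_le_of_le_pi_div_two (by linarith)
        (by linarith [Rd_lt_pi_div_two hd]) hxg.le
    set w : EuclideanSpace ℝ (Fin (d-1)) := BK.repr ⟨y, hyK⟩ with hwdef
    have hwn : ‖w‖ = ‖y‖ := by
      rw [hwdef, LinearIsometryEquiv.norm_map, Submodule.coe_norm]
    refine ⟨w, ?_, ?_⟩
    · rw [Metric.mem_closedBall, dist_zero_right, hwn]
      exact hsinle
    · rw [hGdef]
      simp only
      have hsymm : BK.repr.symm w = (⟨y, hyK⟩ : K) := by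
        rw [hwdef, LinearIsometryEquiv.symm_apply_apply]
      rw [hsymm]
      have h1w2 : 1 - ‖w‖^2 = c^2 := by rw [hwn, hyn2]; ring
      rw [h1w2, Real.sqrt_sq (by linarith : 0 ≤ c)]
      show c • ζ + y = x
      rw [hydef]; abel
  -- measure chain
  have hexp : ((d:ℝ) - 1) = (((d-1:ℕ)) : ℝ) := by
    push_cast [Nat.cast_sub (by omega : 1 ≤ d)]; ring
  have hchain : sphMeasure d (cap ζ r)
      ≤ (Real.toNNReal (4*Real.sqrt d) : ℝ≥0∞) ^ (((d-1:ℕ)):ℝ)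
        * μH[((d-1:ℕ):ℝ)] (Metric.closedBall (0 : EuclideanSpace ℝ (Fin (d-1))) (Real.sin r)) := by
    rw [sphMeasure, hexp]
    calc μH[((d-1:ℕ):ℝ)] (cap ζ r)
        ≤ μH[((d-1:ℕ):ℝ)] (G '' (Metric.closedBall (0 : EuclideanSpace ℝ (Fin (d-1))) (Real.sin r))) :=
          measure_mono hcap
      _ ≤ _ := hGlip.hausdorffMeasure_image_le (by positivity)
  refine le_trans hchain ?_
  calc (Real.toNNReal (4*Real.sqrt d) : ℝ≥0∞) ^ (((d-1:ℕ)):ℝ)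
        * μH[((d-1:ℕ):ℝ)] (Metric.closedBall (0 : EuclideanSpace ℝ (Fin (d-1))) (Real.sin r))
      ≤ ENNReal.ofReal ((4*Real.sqrt d)^(d-1))
        * ENNReal.ofReal (((d-1:ℕ):ℝ)^(d-1) * (2 * Real.sin r)^(d-1)) := by
        apply mul_le_mul' ?_ (hball_upper (d-1) (by omega) hsinr0)
        rw [ENNReal.rpow_natCast]
        rw [ENNReal.ofReal_pow (by positivity)]
        apply pow_le_pow_left' (le_of_eq ?_)
        rw [ENNReal.ofReal]
      _ = ENNReal.ofReal ((4*Real.sqrt d)^(d-1) * (((d-1:ℕ):ℝ)^(d-1) * (2 * Real.sin r)^(d-1))) := by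
        rw [← ENNReal.ofReal_mul (by positivity)]







lemma sphere_cover {d : ℕ} (hd : 2 ≤ d) :
    (Metric.sphere (0 : EuclideanSpace ℝ (Fin d)) 1 : Set (EuclideanSpace ℝ (Fin d)))
      ⊆ ⋃ i : Fin d, (cap (EuclideanSpace.single i (1:ℝ)) (Rd d)
          ∪ cap (EuclideanSpace.single i (-1:ℝ)) (Rd d)) := by
  intro x hx
  have hx1 : ‖x‖ = 1 := mem_sphere_zero_iff_norm.1 hx
  have hdR : (0:ℝ) < Real.sqrt d := Real.sqrt_pos.2 (by exact_mod_cast (by omega : 0 < d))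
  haveI : Nonempty (Fin d) := ⟨⟨0, by omega⟩⟩
  have hsum : ∑ i : Fin d, (x i)^2 = 1 := by
    have h := EuclideanSpace.norm_eq x
    rw [hx1] at h
    have h3 : (0:ℝ) ≤ ∑ i : Fin d, ‖x i‖ ^ 2 := Finset.sum_nonneg fun i _ => sq_nonneg _
    have h4 : ∑ i : Fin d, ‖x i‖^2 = ∑ i : Fin d, x i ^2 := by
      simp [Real.norm_eq_abs, sq_abs]
    nlinarith [Real.sq_sqrt h3]
  have hex : ∃ i : Fin d, (1:ℝ)/d ≤ (x i)^2 := by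
    by_contra hcon
    push_neg at hcon
    have : ∑ i : Fin d, (x i)^2 < ∑ _i : Fin d, (1:ℝ)/d := by
      apply Finset.sum_lt_sum_of_nonempty
      · exact Finset.univ_nonempty
      · exact fun i _ => hcon i
    rw [Finset.sum_const, Finset.card_univ, Fintype.card_fin, nsmul_eq_mul] at this
    rw [hsum] at this
    have hd0 : (0:ℝ) < d := by exact_mod_cast (by omega : 0 < d)
    rw [mul_one_div, div_self hd0.ne'] at this
    linarith
  obtain ⟨i, hi⟩ := hex
  have habs : 1/Real.sqrt d ≤ |x i| := by
    rw [show |x i| = Real.sqrt ((x i)^2) from (Real.sqrt_sq_eq_abs _).symm]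
    rw [show (1:ℝ)/Real.sqrt d = Real.sqrt (1/d) from by
      rw [one_div, one_div, Real.sqrt_inv]]
    exact Real.sqrt_le_sqrt hi
  have hximem : |x i| ≤ 1 := by
    have h1 : (x i)^2 ≤ 1 := by
      rw [← hsum]
      exact Finset.single_le_sum (fun j _ => sq_nonneg (x j)) (Finset.mem_univ i)
    calc |x i| = Real.sqrt ((x i)^2) := (Real.sqrt_sq_eq_abs _).symm
      _ ≤ Real.sqrt 1 := Real.sqrt_le_sqrt h1
      _ = 1 := Real.sqrt_one
  have ht0 := td_pos hd
  have ht2 := td_le_half hd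
  have h2t : 1/Real.sqrt d = 2 * (1/(2*Real.sqrt d)) := by field_simp
  have harccos : ∀ c : ℝ, 1/Real.sqrt d ≤ c → c ≤ 1 → Real.arccos c < Rd d := by
    intro c hc hc1
    have hct : 1/(2*Real.sqrt d) < c := by rw [h2t] at hc; linarith
    have := Real.strictAntiOn_arccos
      ⟨by linarith, by linarith⟩ ⟨by linarith [h2t ▸ hc], hc1⟩ hct
    rwa [Rd]
  rcases le_or_gt 0 (x i) with hpos | hneg
  · refine Set.mem_iUnion.2 ⟨i, Or.inl ⟨hx, ?_⟩⟩
    have hinner : (inner ℝ (EuclideanSpace.single i (1:ℝ)) x : ℝ) = x i := by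
      rw [EuclideanSpace.inner_single_left]
      simp
    rw [geodist, hinner]
    exact harccos (x i) (by rwa [abs_of_nonneg hpos] at habs)
      (by rwa [abs_of_nonneg hpos] at hximem)
  · refine Set.mem_iUnion.2 ⟨i, Or.inr ⟨hx, ?_⟩⟩
    have hinner : (inner ℝ (EuclideanSpace.single i (-1:ℝ)) x : ℝ) = -(x i) := by
      rw [EuclideanSpace.inner_single_left]
      simp
    rw [geodist, hinner]
    exact harccos (-(x i)) (by rwa [abs_of_neg hneg] at habs)
      (by rwa [abs_of_neg hneg] at hximem)

lemma norm_single_one {d : ℕ} (i : Fin d) (a : ℝ) (ha : ‖a‖ = 1) :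
    ‖EuclideanSpace.single i a‖ = 1 := by
  rw [EuclideanSpace.norm_single, ha]

lemma sphere_bound {d : ℕ} (hd : 2 ≤ d) :
    sphMeasure d (Metric.sphere (0 : EuclideanSpace ℝ (Fin d)) 1)
      ≤ (2 * d) * ENNReal.ofReal ((4*Real.sqrt d)^(d-1) * (((d-1:ℕ):ℝ)^(d-1) * 2^(d-1))) := by
  have hcap1 : ∀ (ζ : EuclideanSpace ℝ (Fin d)), ‖ζ‖ = 1 →
      sphMeasure d (cap ζ (Rd d))
        ≤ ENNReal.ofReal ((4*Real.sqrt d)^(d-1) * (((d-1:ℕ):ℝ)^(d-1) * 2^(d-1))) := by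
    intro ζ hζ
    refine le_trans (cap_upper_small hd hζ (Rd_pos hd) le_rfl) ?_
    apply ENNReal.ofReal_le_ofReal
    have hsin : 0 ≤ Real.sin (Rd d) := by
      apply Real.sin_nonneg_of_nonneg_of_le_pi (Rd_pos hd).le
      linarith [Rd_lt_pi_div_two hd, Real.pi_pos]
    have h1 : (2 * Real.sin (Rd d))^(d-1) ≤ 2^(d-1) := by
      apply pow_le_pow_left₀ (by linarith)
      linarith [Real.sin_le_one (Rd d)]
    have hA : (0:ℝ) ≤ (4*Real.sqrt d)^(d-1) := by positivity
    have hB : (0:ℝ) ≤ (((d-1:ℕ):ℝ))^(d-1) := by positivity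
    nlinarith [mul_le_mul_of_nonneg_left h1 hB]
  calc sphMeasure d (Metric.sphere (0 : EuclideanSpace ℝ (Fin d)) 1)
      ≤ ∑ i : Fin d, sphMeasure d (cap (EuclideanSpace.single i (1:ℝ)) (Rd d)
          ∪ cap (EuclideanSpace.single i (-1:ℝ)) (Rd d)) :=
        le_trans (measure_mono (sphere_cover hd)) (measure_iUnion_fintype_le _ _)
    _ ≤ ∑ _i : Fin d, (2 * ENNReal.ofReal ((4*Real.sqrt d)^(d-1) * (((d-1:ℕ):ℝ)^(d-1) * 2^(d-1)))) := by
        apply Finset.sum_le_sum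
        intro i _
        refine le_trans (measure_union_le _ _) ?_
        rw [two_mul]
        exact add_le_add (hcap1 _ (norm_single_one i 1 (by norm_num)))
          (hcap1 _ (norm_single_one i (-1) (by norm_num)))
    _ = (2 * d) * ENNReal.ofReal ((4*Real.sqrt d)^(d-1) * (((d-1:ℕ):ℝ)^(d-1) * 2^(d-1))) := by
        rw [Finset.sum_const, Finset.card_univ, Fintype.card_fin, nsmul_eq_mul]
        ring

lemma cap_subset_sphere {d : ℕ} (ζ : EuclideanSpace ℝ (Fin d)) (r : ℝ) :
    cap ζ r ⊆ Metric.sphere (0 : EuclideanSpace ℝ (Fin d)) 1 := fun _ hx => hx.1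

lemma cap_upper {d : ℕ} (hd : 2 ≤ d) :
    ∃ B : ℝ, 0 < B ∧ ∀ {ζ : EuclideanSpace ℝ (Fin d)}, ‖ζ‖ = 1 →
      ∀ {r : ℝ}, 0 < r → r ≤ 2 →
        sphMeasure d (cap ζ r) ≤ ENNReal.ofReal (B * r^(d-1)) := by
  have hdR : (0:ℝ) < Real.sqrt d := Real.sqrt_pos.2 (by exact_mod_cast (by omega : 0 < d))
  have hd1 : (0:ℝ) < (((d-1:ℕ)):ℝ) := by
    have : 1 ≤ d - 1 := by omega
    exact_mod_cast (by omega : 0 < d - 1)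
  set C0 : ℝ := (4*Real.sqrt d)^(d-1) * (((d-1:ℕ):ℝ)^(d-1) * 2^(d-1)) with hC0def
  have hC0 : 0 < C0 := by positivity
  have hRd := Rd_pos hd
  set B : ℝ := C0 + (2*d) * C0 / (Rd d)^(d-1) with hBdef
  have hB : 0 < B := by positivity
  refine ⟨B, hB, ?_⟩
  intro ζ hζ r hr hr2
  rcases le_or_gt r (Rd d) with hcase | hcase
  · refine le_trans (cap_upper_small hd hζ hr hcase) ?_
    apply ENNReal.ofReal_le_ofReal
    have hsinr : Real.sin r ≤ r := Real.sin_le hr.le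
    have hsinr0 : 0 ≤ Real.sin r := by
      apply Real.sin_nonneg_of_nonneg_of_le_pi hr.le
      linarith [Rd_lt_pi_div_two hd, Real.pi_pos]
    have h1 : (2*Real.sin r)^(d-1) ≤ 2^(d-1) * r^(d-1) := by
      rw [← mul_pow]
      apply pow_le_pow_left₀ (by linarith)
      linarith
    have hA : (0:ℝ) ≤ (4*Real.sqrt d)^(d-1) * ((d-1:ℕ):ℝ)^(d-1) := by positivity
    calc (4*Real.sqrt d)^(d-1) * (((d-1:ℕ):ℝ)^(d-1) * (2 * Real.sin r)^(d-1))
        ≤ (4*Real.sqrt d)^(d-1) * ((d-1:ℕ):ℝ)^(d-1) * (2^(d-1) * r^(d-1)) := by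
          rw [mul_assoc ((4*Real.sqrt d)^(d-1))]
          apply mul_le_mul_of_nonneg_left _ (by positivity)
          apply mul_le_mul_of_nonneg_left h1 (by positivity)
      _ = C0 * r^(d-1) := by rw [hC0def]; ring
      _ ≤ B * r^(d-1) := by
          apply mul_le_mul_of_nonneg_right _ (by positivity)
          rw [hBdef]
          have : 0 < (2*(d:ℝ)) * C0 / (Rd d)^(d-1) := by positivity
          linarith
  · refine le_trans (measure_mono (cap_subset_sphere ζ r)) ?_
    refine le_trans (sphere_bound hd) ?_
    rw [show ((2 * (d:ℕ)) : ℝ≥0∞) = ENNReal.ofReal ((2:ℝ) * d) from by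
      rw [ENNReal.ofReal_mul (by norm_num)]
      simp [ENNReal.ofReal_natCast, ENNReal.ofReal_ofNat]]
    rw [← ENNReal.ofReal_mul (by positivity)]
    apply ENNReal.ofReal_le_ofReal
    have hRdr : (Rd d)^(d-1) ≤ r^(d-1) := pow_le_pow_left₀ hRd.le hcase.le _
    rw [hBdef, add_mul]
    have h3 : ((2*(d:ℝ)) * C0 / (Rd d)^(d-1)) * (Rd d)^(d-1)
        ≤ ((2*(d:ℝ)) * C0 / (Rd d)^(d-1)) * r^(d-1) := by
      apply mul_le_mul_of_nonneg_left hRdr (by positivity)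
    have h2 : ((2*(d:ℝ)) * C0 / (Rd d)^(d-1)) * (Rd d)^(d-1) = (2*(d:ℝ))*C0 := by
      field_simp
    have h4 : (0:ℝ) ≤ C0 * r^(d-1) := by positivity
    nlinarith








lemma cap_measurable {d : ℕ} (ζ : EuclideanSpace ℝ (Fin d)) (r : ℝ) :
    MeasurableSet (cap ζ r) := by
  have h1 : Continuous (fun x : EuclideanSpace ℝ (Fin d) => geodist ζ x) := by
    apply Real.continuous_arccos.comp
    exact Continuous.inner continuous_const continuous_id
  have h2 : MeasurableSet {x : EuclideanSpace ℝ (Fin d) | geodist ζ x < r} :=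
    measurableSet_lt (h1.measurable) measurable_const
  have h3 : MeasurableSet (Metric.sphere (0 : EuclideanSpace ℝ (Fin d)) 1) :=
    Metric.isClosed_sphere.measurableSet
  exact h3.inter h2


end SC16


open SC16 in
theorem stmt16 (d : ℕ) (hd : 2 ≤ d) (p : ℝ) (hp : 0 < p) :
    ∃ c > (0:ℝ), ∀ γ : ℝ, 0 < γ → γ < 1 →
      ∀ X : ℕ → Finset (EuclideanSpace ℝ (Fin d)),
        (∀ j : ℕ, ∀ η ∈ X j, η ∈ Metric.sphere (0 : EuclideanSpace ℝ (Fin d)) 1) →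
        (∀ j : ℕ, ∀ η₁ ∈ X j, ∀ η₂ ∈ X j, η₁ ≠ η₂ →
          γ * 2 ^ (-(j : ℝ) + 1) ≤ geodist η₁ η₂) →
        (∀ j : ℕ, ∀ x ∈ Metric.sphere (0 : EuclideanSpace ℝ (Fin d)) 1,
          ∃ η ∈ X j, geodist η x < γ * 2 ^ (-(j : ℝ) + 1)) →
        ∀ Y : Finset (ℕ × EuclideanSpace ℝ (Fin d)),
          (∀ b ∈ Y, b.2 ∈ X b.1) →
          (∀ b ∈ Y, 0 < sphMeasure d (cap b.2 (γ * 2 ^ (-(b.1 : ℝ) + 1)))) →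
          (∫⁻ x in Metric.sphere (0 : EuclideanSpace ℝ (Fin d)) 1,
              (∑ b ∈ Y,
                (sphMeasure d (cap b.2 (γ * 2 ^ (-(b.1 : ℝ) + 1)))) ^ (-(1 / p)) *
                  Set.indicator (cap b.2 (γ * 2 ^ (-(b.1 : ℝ) + 1)))
                    (fun _ => (1 : ℝ≥0∞)) x) ^ p
              ∂(sphMeasure d)) ^ (1 / p)
            ≤ ENNReal.ofReal c * (Y.card : ℝ≥0∞) ^ (1 / p) := by
  classical
  have hπ := Real.pi_pos
  obtain ⟨B, hB, hBspec⟩ := cap_upper (d := d) hd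
  set m1 : ℝ := ((d-1:ℕ):ℝ)/p with hm1def
  have hd1 : (0:ℝ) < ((d-1:ℕ):ℝ) := by exact_mod_cast (by omega : 0 < d - 1)
  have hm1 : 0 < m1 := by positivity
  set ω : ℝ := (2:ℝ) ^ m1 with hωdef
  have hω1 : 1 < ω :=
    Real.one_lt_rpow_iff_of_pos (by norm_num) |>.2 (Or.inl ⟨by norm_num, hm1⟩)
  set Cg : ℝ := ω / (ω - 1) with hCgdef
  have hCg : 0 < Cg := by
    apply div_pos (by linarith) (by linarith)
  set Pd : ℝ := (1 + Real.pi)^d with hPddef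
  have hPd : 0 < Pd := by positivity
  set c2 : ℝ := Cg * ((4*(d:ℝ))^m1 * B^(1/p)) with hc2def
  have hdpos : (0:ℝ) < (d:ℝ) := by exact_mod_cast (by omega : 0 < d)
  have hc2 : 0 < c2 := by
    have h1 : (0:ℝ) < (4*(d:ℝ))^m1 := Real.rpow_pos_of_pos (by positivity) _
    have h2 : (0:ℝ) < B^(1/p) := Real.rpow_pos_of_pos hB _
    positivity
  refine ⟨Pd * c2, by positivity, ?_⟩
  intro γ hγ0 hγ1 X hX1 hsep _hcov Y hY1 hY2
  set R : ℕ → ℝ := fun j => γ * 2 ^ (-(j:ℝ)+1) with hRdef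
  have hRpos : ∀ j, 0 < R j := fun j => by
    have : (0:ℝ) < (2:ℝ) ^ (-(j:ℝ)+1) := Real.rpow_pos_of_pos (by norm_num) _
    positivity
  have hR2 : ∀ j, R j ≤ 2 := by
    intro j
    have h1 : (2:ℝ) ^ (-(j:ℝ)+1) ≤ (2:ℝ) ^ (1:ℝ) := by
      apply Real.rpow_le_rpow_of_exponent_le one_le_two
      have : (0:ℝ) ≤ (j:ℝ) := Nat.cast_nonneg j
      linarith
    rw [Real.rpow_one] at h1
    calc R j ≤ 1 * ((2:ℝ) ^ (-(j:ℝ)+1)) := by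
          apply mul_le_mul_of_nonneg_right hγ1.le (by positivity)
      _ ≤ 1 * 2 := by rw [one_mul, one_mul]; exact h1
      _ = 2 := by norm_num
  set mm : (ℕ × EuclideanSpace ℝ (Fin d)) → ℝ≥0∞ :=
    fun b => sphMeasure d (cap b.2 (R b.1)) with hmmdef
  have hsphcenter : ∀ b ∈ Y, ‖b.2‖ = 1 := fun b hb =>
    mem_sphere_zero_iff_norm.1 (hX1 b.1 b.2 (hY1 b hb))
  have hlow : ∀ b ∈ Y, ENNReal.ofReal ((R b.1 / (4*d))^(d-1)) ≤ mm b := fun b hb =>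
    cap_lower hd (hsphcenter b hb) (hRpos b.1) (hR2 b.1)
  have hup : ∀ b ∈ Y, mm b ≤ ENNReal.ofReal (B * (R b.1)^(d-1)) := fun b hb =>
    hBspec (hsphcenter b hb) (hRpos b.1) (hR2 b.1)
  have hfin : ∀ b ∈ Y, mm b ≠ ⊤ := fun b hb =>
    (lt_of_le_of_lt (hup b hb) ENNReal.ofReal_lt_top).ne
  -- pointwise bound
  have hpoint : ∀ x : EuclideanSpace ℝ (Fin d),
      (∑ b ∈ Y, (mm b) ^ (-(1 / p)) *
        Set.indicator (cap b.2 (R b.1)) (fun _ => (1 : ℝ≥0∞)) x) ^ p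
      ≤ (ENNReal.ofReal (Pd * c2))^p *
        ∑ b ∈ Y, (mm b)⁻¹ * Set.indicator (cap b.2 (R b.1)) (fun _ => (1 : ℝ≥0∞)) x := by
    intro x
    by_cases hex : ∃ b ∈ Y, x ∈ cap b.2 (R b.1)
    case neg =>
      have hzero : (∑ b ∈ Y, (mm b) ^ (-(1 / p)) *
          Set.indicator (cap b.2 (R b.1)) (fun _ => (1:ℝ≥0∞)) x) = 0 := by
        apply Finset.sum_eq_zero
        intro b hb
        have hnx : x ∉ cap b.2 (R b.1) := fun h => hex ⟨b, hb, h⟩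
        rw [Set.indicator_of_notMem hnx, mul_zero]
      rw [hzero, ENNReal.zero_rpow_of_pos hp]
      exact zero_le
    case pos =>
      obtain ⟨b0, hb0Y, hb0x⟩ := hex
      have hxS : ‖x‖ = 1 := mem_sphere_zero_iff_norm.1 hb0x.1
      set Sx := Y.filter (fun b => x ∈ cap b.2 (R b.1)) with hSxdef
      have hSxne : Sx.Nonempty := ⟨b0, Finset.mem_filter.2 ⟨hb0Y, hb0x⟩⟩
      have himne : (Sx.image Prod.fst).Nonempty := hSxne.image _
      set J := (Sx.image Prod.fst).max' himne with hJdef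
      obtain ⟨bs, hbsSx, hbsJ⟩ : ∃ b ∈ Sx, b.1 = J := by
        have hmem := (Sx.image Prod.fst).max'_mem himne
        obtain ⟨b, hb, hbeq⟩ := Finset.mem_image.1 hmem
        exact ⟨b, hb, hbeq⟩
      have hbsY : bs ∈ Y := (Finset.mem_filter.1 hbsSx).1
      have hbsx : x ∈ cap bs.2 (R bs.1) := (Finset.mem_filter.1 hbsSx).2
      -- sum restricted to Sx
      have hFx : (∑ b ∈ Y, (mm b) ^ (-(1 / p)) *
          Set.indicator (cap b.2 (R b.1)) (fun _ => (1:ℝ≥0∞)) x)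
          = ∑ b ∈ Sx, (mm b) ^ (-(1 / p)) := by
        rw [hSxdef, Finset.sum_filter]
        apply Finset.sum_congr rfl
        intro b _
        by_cases hbx : x ∈ cap b.2 (R b.1)
        · rw [if_pos hbx, Set.indicator_of_mem hbx, mul_one]
        · rw [if_neg hbx, Set.indicator_of_notMem hbx, mul_zero]
      -- fiberwise decomposition
      have hmapsto : ∀ b ∈ Sx, b.1 ∈ Finset.range (J+1) := by
        intro b hb
        rw [Finset.mem_range]
        have := Finset.le_max' (Sx.image Prod.fst) b.1 (Finset.mem_image_of_mem Prod.fst hb)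
        omega
      have hfiber : ∑ b ∈ Sx, (mm b) ^ (-(1 / p))
          = ∑ j ∈ Finset.range (J+1), ∑ b ∈ Sx.filter (fun b => b.1 = j),
              (mm b) ^ (-(1 / p)) :=
        (Finset.sum_fiberwise_of_maps_to hmapsto _).symm
      set q : ℕ → ℝ := fun j => (R j / (4*(d:ℝ)))^(d-1) with hqdef
      have hq0 : ∀ j, 0 < q j := by
        intro j
        have := hRpos j
        rw [hqdef]
        positivity
      -- per-fiber bound
      have hfib : ∀ j, (∑ b ∈ Sx.filter (fun b => b.1 = j), (mm b) ^ (-(1 / p)))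
          ≤ ENNReal.ofReal Pd * ENNReal.ofReal ((q j) ^ (-(1/p))) := by
        intro j
        have hterm : ∀ b ∈ Sx.filter (fun b => b.1 = j),
            (mm b) ^ (-(1 / p)) ≤ ENNReal.ofReal ((q j) ^ (-(1/p))) := by
          intro b hb
          obtain ⟨hbSx, hbj⟩ := Finset.mem_filter.1 hb
          have hbY := (Finset.mem_filter.1 hbSx).1
          have h1 : ENNReal.ofReal (q j) ≤ mm b := by
            have h2 := hlow b hbY
            rw [hqdef]
            rw [← hbj]
            exact h2
          calc (mm b) ^ (-(1 / p)) ≤ (ENNReal.ofReal (q j)) ^ (-(1/p)) := by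
                rw [ENNReal.rpow_neg, ENNReal.rpow_neg]
                exact ENNReal.inv_le_inv.2 (ENNReal.rpow_le_rpow h1 (by positivity))
            _ = ENNReal.ofReal ((q j) ^ (-(1/p))) := ENNReal.ofReal_rpow_of_pos (hq0 j)
        have hcard : (((Sx.filter (fun b => b.1 = j))).card : ℝ≥0∞) ≤ ENNReal.ofReal Pd := by
          have hinj : Set.InjOn Prod.snd
              ((Sx.filter (fun b => b.1 = j) : Finset (ℕ × EuclideanSpace ℝ (Fin d))) :
                Set (ℕ × EuclideanSpace ℝ (Fin d))) := by
            intro b1 h1 b2 h2 heq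
            have hj1 : b1.1 = j := (Finset.mem_filter.1 (Finset.mem_coe.1 h1)).2
            have hj2 : b2.1 = j := (Finset.mem_filter.1 (Finset.mem_coe.1 h2)).2
            exact Prod.ext (hj1.trans hj2.symm) heq
          set T := (Sx.filter (fun b => b.1 = j)).image Prod.snd with hTdef
          have hcardT : (Sx.filter (fun b => b.1 = j)).card = T.card :=
            (Finset.card_image_of_injOn hinj).symm
          rw [hcardT, hPddef]
          apply packing_bound d (by omega) x (hRpos j) T
          · intro η hη
            obtain ⟨b, hb, rfl⟩ := Finset.mem_image.1 hη
            obtain ⟨hbSx, hbj⟩ := Finset.mem_filter.1 hb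
            have hbY := (Finset.mem_filter.1 hbSx).1
            have hbx : x ∈ cap b.2 (R b.1) := (Finset.mem_filter.1 hbSx).2
            calc dist b.2 x ≤ geodist b.2 x := dist_le_geodist (hsphcenter b hbY) hxS
              _ < R b.1 := hbx.2
              _ = R j := by rw [hbj]
          · intro η1 hη1 η2 hη2 hne
            obtain ⟨b1, hb1, rfl⟩ := Finset.mem_image.1 hη1
            obtain ⟨b2, hb2, rfl⟩ := Finset.mem_image.1 hη2
            obtain ⟨hb1Sx, hb1j⟩ := Finset.mem_filter.1 hb1
            obtain ⟨hb2Sx, hb2j⟩ := Finset.mem_filter.1 hb2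
            have hb1Y := (Finset.mem_filter.1 hb1Sx).1
            have hb2Y := (Finset.mem_filter.1 hb2Sx).1
            have hXa : b1.2 ∈ X j := by rw [← hb1j]; exact hY1 b1 hb1Y
            have hXb : b2.2 ∈ X j := by rw [← hb2j]; exact hY1 b2 hb2Y
            have hg := hsep j b1.2 hXa b2.2 hXb hne
            calc 2/Real.pi * R j ≤ 2/Real.pi * geodist b1.2 b2.2 :=
                  mul_le_mul_of_nonneg_left hg (by positivity)
              _ ≤ dist b1.2 b2.2 :=
                  geodist_le_mul_dist (hsphcenter b1 hb1Y) (hsphcenter b2 hb2Y)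
        calc ∑ b ∈ Sx.filter (fun b => b.1 = j), (mm b) ^ (-(1 / p))
            ≤ ∑ _b ∈ Sx.filter (fun b => b.1 = j), ENNReal.ofReal ((q j)^(-(1/p))) :=
              Finset.sum_le_sum hterm
          _ = (((Sx.filter (fun b => b.1 = j))).card : ℝ≥0∞)
                * ENNReal.ofReal ((q j)^(-(1/p))) := by
              rw [Finset.sum_const, nsmul_eq_mul]
          _ ≤ ENNReal.ofReal Pd * ENNReal.ofReal ((q j)^(-(1/p))) :=
              mul_le_mul_left hcard _
      -- the values q j ^ (-(1/p)) form a geometric progression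
      set V0 : ℝ := ((γ/(2*(d:ℝ)))^(d-1))^(-(1/p)) with hV0def
      have hV0 : 0 < V0 := by
        have hbase : (0:ℝ) < γ/(2*(d:ℝ)) := by positivity
        rw [hV0def]
        apply Real.rpow_pos_of_pos
        positivity
      have hvJ : ∀ j : ℕ, (q j)^(-(1/p)) = V0 * ω^j := by
        intro j
        have hRj : R j / (4*(d:ℝ)) = (γ/(2*(d:ℝ))) * (2:ℝ)^(-(j:ℝ)) := by
          have h2 : (2:ℝ)^(-(j:ℝ)+1) = (2:ℝ)^(-(j:ℝ)) * 2 := by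
            rw [Real.rpow_add (by norm_num), Real.rpow_one]
          simp only [hRdef, h2]
          field_simp
          ring
        have h2j : (0:ℝ) < (2:ℝ)^(-(j:ℝ)) := Real.rpow_pos_of_pos (by norm_num) _
        simp only [hqdef]
        rw [hRj, mul_pow, Real.mul_rpow (by positivity) (by positivity)]
        rw [← hV0def]
        congr 1
        -- ((2^(-j))^(d-1))^(-(1/p)) = ω^j
        rw [← Real.rpow_natCast ((2:ℝ)^(-(j:ℝ))) (d-1), ← Real.rpow_mul h2j.le,
          ← Real.rpow_mul (by norm_num), hωdef, ← Real.rpow_natCast ((2:ℝ)^m1) j,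
          ← Real.rpow_mul (by norm_num)]
        congr 1
        rw [hm1def]
        field_simp
      have hgeom : ∑ j ∈ Finset.range (J+1), (q j)^(-(1/p)) ≤ Cg * (V0 * ω^J) := by
        have h1 : ∑ j ∈ Finset.range (J+1), (q j)^(-(1/p))
            = V0 * ∑ j ∈ Finset.range (J+1), ω^j := by
          rw [Finset.mul_sum]
          exact Finset.sum_congr rfl fun j _ => hvJ j
        rw [h1]
        have h2 : ∑ j ∈ Finset.range (J+1), ω^j = (ω^(J+1) - 1)/(ω - 1) :=
          geom_sum_eq (by linarith) (J+1)
        have h3 : (ω^(J+1) - 1)/(ω - 1) ≤ ω^(J+1)/(ω-1) := by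
          apply div_le_div_of_nonneg_right (by linarith) (by linarith)
        have h4 : ω^(J+1)/(ω-1) = Cg * ω^J := by
          rw [hCgdef, pow_succ]
          field_simp
        calc V0 * ∑ j ∈ Finset.range (J+1), ω^j = V0 * ((ω^(J+1) - 1)/(ω - 1)) := by rw [h2]
          _ ≤ V0 * (Cg * ω^J) := by
              apply mul_le_mul_of_nonneg_left _ hV0.le
              rw [← h4]; exact h3
          _ = Cg * (V0 * ω^J) := by ring
      -- identify V0 * ω^J with the measure of the largest cap
      have hRJpos := hRpos J
      have hWq : V0 * ω^J = ((R J)^(d-1))^(-(1/p)) * (4*(d:ℝ))^m1 := by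
        rw [← hvJ J]
        simp only [hqdef]
        rw [div_pow, Real.div_rpow (by positivity) (by positivity), div_eq_mul_inv]
        congr 1
        rw [← Real.rpow_natCast (4*(d:ℝ)) (d-1), ← Real.rpow_mul (by positivity),
          ← Real.rpow_neg (by positivity)]
        congr 1
        rw [hm1def]
        field_simp
      -- combine everything into the final pointwise bound
      have hcomb : (∑ b ∈ Y, (mm b) ^ (-(1 / p)) *
          Set.indicator (cap b.2 (R b.1)) (fun _ => (1:ℝ≥0∞)) x)
          ≤ ENNReal.ofReal (Pd * c2) * (mm bs) ^ (-(1/p)) := by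
        rw [hFx, hfiber]
        have hW : (0:ℝ) < ((R J)^(d-1))^(-(1/p)) := Real.rpow_pos_of_pos (by positivity) _
        have hkey : Cg * (V0 * ω^J) = c2 * (B^(-(1/p)) * ((R J)^(d-1))^(-(1/p))) := by
          rw [hWq, hc2def]
          have hBp : B^(1/p) * B^(-(1/p)) = 1 := by
            rw [← Real.rpow_add hB]; simp
          rw [show Cg * ((4*(d:ℝ))^m1 * B^(1/p)) * (B^(-(1/p)) * (((R J)^(d-1))^(-(1/p))))
              = Cg * (((R J)^(d-1))^(-(1/p)) * (4*(d:ℝ))^m1) * (B^(1/p) * B^(-(1/p))) from by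
            ring]
          rw [hBp, mul_one]
        have h5 : ENNReal.ofReal (B^(-(1/p)) * ((R J)^(d-1))^(-(1/p))) ≤ (mm bs)^(-(1/p)) := by
          have h6 : mm bs ≤ ENNReal.ofReal (B * (R bs.1)^(d-1)) := hup bs hbsY
          rw [hbsJ] at h6
          have h7 : (0:ℝ) < B * (R J)^(d-1) := by positivity
          calc ENNReal.ofReal (B^(-(1/p)) * ((R J)^(d-1))^(-(1/p)))
              = ENNReal.ofReal ((B * (R J)^(d-1))^(-(1/p))) := by
                rw [Real.mul_rpow hB.le (by positivity)]
            _ = (ENNReal.ofReal (B * (R J)^(d-1)))^(-(1/p)) :=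
                (ENNReal.ofReal_rpow_of_pos h7).symm
            _ ≤ (mm bs)^(-(1/p)) := by
                rw [ENNReal.rpow_neg, ENNReal.rpow_neg]
                exact ENNReal.inv_le_inv.2 (ENNReal.rpow_le_rpow h6 (by positivity))
        calc ∑ j ∈ Finset.range (J+1), ∑ b ∈ Sx.filter (fun b => b.1 = j), (mm b) ^ (-(1 / p))
            ≤ ∑ j ∈ Finset.range (J+1),
                ENNReal.ofReal Pd * ENNReal.ofReal ((q j)^(-(1/p))) :=
              Finset.sum_le_sum fun j _ => hfib j
          _ = ENNReal.ofReal Pd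
                * ∑ j ∈ Finset.range (J+1), ENNReal.ofReal ((q j)^(-(1/p))) := by
              rw [← Finset.mul_sum]
          _ = ENNReal.ofReal Pd
                * ENNReal.ofReal (∑ j ∈ Finset.range (J+1), (q j)^(-(1/p))) := by
              rw [ENNReal.ofReal_sum_of_nonneg]
              intro j _
              exact le_of_lt (Real.rpow_pos_of_pos (hq0 j) _)
          _ ≤ ENNReal.ofReal Pd * ENNReal.ofReal (Cg * (V0 * ω^J)) :=
              mul_le_mul' le_rfl (ENNReal.ofReal_le_ofReal hgeom)
          _ ≤ ENNReal.ofReal (Pd * c2) * (mm bs) ^ (-(1/p)) := by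
              rw [hkey, ENNReal.ofReal_mul hc2.le,
                ENNReal.ofReal_mul (by positivity : (0:ℝ) ≤ Pd), ← mul_assoc]
              exact mul_le_mul' le_rfl h5
      -- raise to the p-th power
      calc (∑ b ∈ Y, (mm b) ^ (-(1 / p)) *
            Set.indicator (cap b.2 (R b.1)) (fun _ => (1:ℝ≥0∞)) x)^p
          ≤ (ENNReal.ofReal (Pd*c2) * (mm bs)^(-(1/p)))^p :=
            ENNReal.rpow_le_rpow hcomb hp.le
        _ = (ENNReal.ofReal (Pd*c2))^p * ((mm bs)^(-(1/p)))^p :=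
            ENNReal.mul_rpow_of_nonneg _ _ hp.le
        _ = (ENNReal.ofReal (Pd*c2))^p * (mm bs)⁻¹ := by
            rw [← ENNReal.rpow_mul, show -(1/p) * p = -1 by field_simp, ENNReal.rpow_neg_one]
        _ ≤ (ENNReal.ofReal (Pd*c2))^p * ∑ b ∈ Y, (mm b)⁻¹ *
              Set.indicator (cap b.2 (R b.1)) (fun _ => (1:ℝ≥0∞)) x := by
            apply mul_le_mul' le_rfl
            have hbsind : (mm bs)⁻¹ = (mm bs)⁻¹ *
                Set.indicator (cap bs.2 (R bs.1)) (fun _ => (1:ℝ≥0∞)) x := by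
              rw [Set.indicator_of_mem hbsx, mul_one]
            rw [hbsind]
            exact Finset.single_le_sum (f := fun b => (mm b)⁻¹ *
              Set.indicator (cap b.2 (R b.1)) (fun _ => (1:ℝ≥0∞)) x)
              (fun b _ => zero_le) hbsY


  -- integrate
  have hint : (∫⁻ x in Metric.sphere (0 : EuclideanSpace ℝ (Fin d)) 1,
      (∑ b ∈ Y, (mm b) ^ (-(1 / p)) *
        Set.indicator (cap b.2 (R b.1)) (fun _ => (1 : ℝ≥0∞)) x) ^ p ∂(sphMeasure d))
      ≤ (ENNReal.ofReal (Pd * c2))^p * (Y.card : ℝ≥0∞) := by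
    refine le_trans (lintegral_mono fun x => hpoint x) ?_
    rw [lintegral_const_mul' _ _ (ENNReal.rpow_lt_top_of_nonneg hp.le ENNReal.ofReal_ne_top).ne]
    apply mul_le_mul' le_rfl
    have hmeas : ∀ b ∈ Y, Measurable (fun x => (mm b)⁻¹ *
        Set.indicator (cap b.2 (R b.1)) (fun _ => (1 : ℝ≥0∞)) x) := by
      intro b _
      exact ((measurable_const.indicator (cap_measurable _ _)).const_mul _)
    rw [lintegral_finset_sum _ hmeas]
    have hone : ∀ b ∈ Y, (∫⁻ x in Metric.sphere (0 : EuclideanSpace ℝ (Fin d)) 1,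
        (mm b)⁻¹ * Set.indicator (cap b.2 (R b.1)) (fun _ => (1 : ℝ≥0∞)) x ∂(sphMeasure d)) ≤ 1 := by
      intro b hb
      rw [lintegral_const_mul' _ _ (ENNReal.inv_ne_top.2 (hY2 b hb).ne')]
      have hind : (∫⁻ x in Metric.sphere (0 : EuclideanSpace ℝ (Fin d)) 1,
          Set.indicator (cap b.2 (R b.1)) (fun _ => (1 : ℝ≥0∞)) x ∂(sphMeasure d)) = mm b := by
        rw [show (fun _ : EuclideanSpace ℝ (Fin d) => (1:ℝ≥0∞))
          = (1 : EuclideanSpace ℝ (Fin d) → ℝ≥0∞) from rfl]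
        rw [lintegral_indicator_one (cap_measurable _ _)]
        rw [Measure.restrict_apply (cap_measurable _ _)]
        rw [Set.inter_eq_self_of_subset_left (fun _ hx => hx.1)]
      rw [hind, ENNReal.inv_mul_cancel (hY2 b hb).ne' (hfin b hb)]
    calc ∑ b ∈ Y, (∫⁻ x in Metric.sphere (0 : EuclideanSpace ℝ (Fin d)) 1,
          (mm b)⁻¹ * Set.indicator (cap b.2 (R b.1)) (fun _ => (1 : ℝ≥0∞)) x ∂(sphMeasure d))
        ≤ ∑ _b ∈ Y, (1:ℝ≥0∞) := Finset.sum_le_sum hone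
      _ = Y.card := by rw [Finset.sum_const, nsmul_eq_mul, mul_one]
  -- conclude
  have hconc : (∫⁻ x in Metric.sphere (0 : EuclideanSpace ℝ (Fin d)) 1,
      (∑ b ∈ Y, (mm b) ^ (-(1 / p)) *
        Set.indicator (cap b.2 (R b.1)) (fun _ => (1 : ℝ≥0∞)) x) ^ p ∂(sphMeasure d)) ^ (1/p)
      ≤ ENNReal.ofReal (Pd * c2) * (Y.card : ℝ≥0∞) ^ (1/p) := by
    refine le_trans (ENNReal.rpow_le_rpow hint (by positivity)) ?_
    rw [ENNReal.mul_rpow_of_nonneg _ _ (by positivity)]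
    apply mul_le_mul' (le_of_eq ?_) le_rfl
    rw [← ENNReal.rpow_mul, mul_one_div_cancel hp.ne', ENNReal.rpow_one]
  exact hconc
end

section
/- Let d > 2, M > d−2, 0 < ε ≤ 1, a := 1+ε, and m := ⌈(M−d+2)/2⌉. Define F_ε(u) := ε^{2m−1}(a² + 1 − 2au)^{−d/2+1−m} for u ∈ [−1,1]. Then for all x, η on the unit sphere S^{d-1}: (i) F_ε(x·η) = ε^{2m−1} |x − aη|^{−d+2−2m}; (ii) 0 < F_ε(x·η) ≤ c₁ ε^{−d+1}/(1 + ε^{−1} ρ(x,η))^M, where c₁ depends only on m and d; and (iii) ∫_{S^{d-1}} F_ε(x·η) dσ(x) ≥ c₂ > 0 for a constant c₂ depending only on m and d. -/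
open MeasureTheory

/-- `F_ε(u) = ε^{2m−1} (a² + 1 − 2au)^{−d/2+1−m}` with `a = 1 + ε`. -/
noncomputable def Feps (d m : ℕ) (ε : ℝ) (u : ℝ) : ℝ :=
  ε ^ (2 * m - 1) *
    ((1 + ε) ^ 2 + 1 - 2 * (1 + ε) * u) ^ (-(d : ℝ) / 2 + 1 - (m : ℝ))

section Aux

lemma norm_sub_smul_sq {d : ℕ} {x η : EuclideanSpace ℝ (Fin d)} (hx : ‖x‖ = 1)
    (hη : ‖η‖ = 1) {a : ℝ} (ha : 0 ≤ a) :
    ‖x - a • η‖ ^ 2 = a ^ 2 + 1 - 2 * a * (inner ℝ x η : ℝ) := by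
  rw [norm_sub_sq_real, norm_smul, real_inner_smul_right, hx, hη]
  simp [abs_of_nonneg ha]; ring

lemma Feps_eq {d m : ℕ} {ε : ℝ} (hε : 0 < ε) {x η : EuclideanSpace ℝ (Fin d)}
    (hx : ‖x‖ = 1) (hη : ‖η‖ = 1) :
    Feps d m ε (inner ℝ x η : ℝ)
      = ε ^ (2 * m - 1) * ‖x - (1 + ε) • η‖ ^ (-(d : ℝ) + 2 - 2 * (m : ℝ)) := by
  unfold Feps
  congr 1
  rw [← norm_sub_smul_sq hx hη (by linarith : (0:ℝ) ≤ 1 + ε),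
    ← Real.rpow_natCast (‖x - (1+ε) • η‖) 2, ← Real.rpow_mul (norm_nonneg _)]
  congr 1
  push_cast; ring

lemma Feps_pos {d m : ℕ} {ε u : ℝ} (hε : 0 < ε) (hu2 : u ≤ 1) :
    0 < Feps d m ε u := by
  have hQ : 0 < (1 + ε) ^ 2 + 1 - 2 * (1 + ε) * u := by nlinarith
  exact mul_pos (pow_pos hε _) (Real.rpow_pos_of_pos hQ _)

lemma Feps_le {d m : ℕ} (hd : 2 < d) (hm : 1 ≤ m) {M ε u : ℝ} (hM : 0 < M)
    (hMs : M ≤ (d:ℝ) - 2 + 2*m) (hε : 0 < ε) (hε1 : ε ≤ 1)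
    (hu1 : -1 ≤ u) (hu2 : u ≤ 1) :
    Feps d m ε u ≤ Real.pi ^ ((d:ℝ) - 2 + 2*(m:ℝ)) * ε ^ (-(d:ℝ) + 1)
      / (1 + ε⁻¹ * Real.arccos u) ^ M := by
  set s : ℝ := (d:ℝ) - 2 + 2*m with hs
  have hd3 : (3:ℝ) ≤ d := by exact_mod_cast hd
  have hm1 : (1:ℝ) ≤ m := by exact_mod_cast hm
  have hspos : 0 < s := by simp only [hs]; nlinarith
  set ρ := Real.arccos u with hρ
  have hρ0 : 0 ≤ ρ := Real.arccos_nonneg u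
  have hρπ : ρ ≤ Real.pi := Real.arccos_le_pi u
  have hcos : Real.cos ρ = u := Real.cos_arccos hu1 hu2
  have hπ : (3:ℝ) < Real.pi := Real.pi_gt_three
  have hπ2 : (0:ℝ) < Real.pi ^ 2 := by positivity
  have hπ9 : (9:ℝ) ≤ Real.pi ^ 2 := by nlinarith
  set z := 1 + ε⁻¹ * ρ with hz
  have hone : (1:ℝ) ≤ z := by
    have : 0 ≤ ε⁻¹ * ρ := by positivity
    simp only [hz]; linarith
  have hzpos : (0:ℝ) < z := by linarith
  have h1 : u ≤ 1 - 2 / Real.pi ^ 2 * ρ ^ 2 := by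
    rw [← hcos]
    exact Real.cos_le_one_sub_mul_cos_sq (by rw [abs_of_nonneg hρ0]; exact hρπ)
  have h1' : Real.pi ^ 2 * u ≤ Real.pi ^ 2 - 2 * ρ ^ 2 := by
    calc Real.pi ^ 2 * u ≤ Real.pi ^ 2 * (1 - 2 / Real.pi ^ 2 * ρ ^ 2) :=
          mul_le_mul_of_nonneg_left h1 hπ2.le
      _ = Real.pi ^ 2 - 2 * ρ ^ 2 := by field_simp
  have hQβ : ((ε + ρ)/Real.pi) ^ 2 ≤ (1 + ε) ^ 2 + 1 - 2 * (1 + ε) * u := by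
    rw [div_pow, div_le_iff₀ hπ2]
    nlinarith [mul_le_mul_of_nonneg_left h1' (show (0:ℝ) ≤ 2*(1+ε) by linarith),
      sq_nonneg (ε - ρ), mul_le_mul_of_nonneg_left hπ9 (sq_nonneg ε),
      mul_nonneg (mul_nonneg hε.le hρ0) hρ0, mul_nonneg hε.le (sq_nonneg ρ)]
  have hβpos : (0:ℝ) < ((ε + ρ)/Real.pi) ^ 2 := by positivity
  have hexp : -(d:ℝ)/2 + 1 - m = -s/2 := by simp only [hs]; ring
  rw [Feps, hexp]
  have hbase : 0 < (ε + ρ)/Real.pi := by positivity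
  have step1 : ((1 + ε) ^ 2 + 1 - 2 * (1 + ε) * u) ^ (-s/2)
      ≤ (((ε + ρ)/Real.pi) ^ 2) ^ (-s/2) :=
    Real.rpow_le_rpow_of_nonpos hβpos hQβ (by linarith)
  have step2 : (((ε + ρ)/Real.pi) ^ 2) ^ (-s/2) = ((ε + ρ)/Real.pi) ^ (-s) := by
    rw [← Real.rpow_natCast ((ε + ρ)/Real.pi) 2, ← Real.rpow_mul hbase.le]
    congr 1; push_cast; ring
  have step3 : ((ε + ρ)/Real.pi) ^ (-s) = Real.pi ^ s * (ε + ρ) ^ (-s) := by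
    rw [Real.div_rpow (by positivity) Real.pi_pos.le, Real.rpow_neg Real.pi_pos.le,
      div_eq_mul_inv, inv_inv]
    ring
  have hmul : ε + ρ = ε * z := by simp only [hz]; field_simp
  have step4 : (ε + ρ) ^ (-s) = ε ^ (-s) * z ^ (-s) := by
    rw [hmul, Real.mul_rpow hε.le hzpos.le]
  have step5 : z ^ (-s) ≤ z ^ (-M) :=
    Real.rpow_le_rpow_of_exponent_le hone (by linarith)
  have hchain : ((1 + ε) ^ 2 + 1 - 2 * (1 + ε) * u) ^ (-s/2)
      ≤ Real.pi ^ s * (ε ^ (-s) * z ^ (-M)) := by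
    calc ((1 + ε) ^ 2 + 1 - 2 * (1 + ε) * u) ^ (-s/2)
        ≤ ((( ε + ρ)/Real.pi) ^ 2) ^ (-s/2) := step1
      _ = Real.pi ^ s * (ε ^ (-s) * z ^ (-s)) := by rw [step2, step3, step4]
      _ ≤ Real.pi ^ s * (ε ^ (-s) * z ^ (-M)) := by
          apply mul_le_mul_of_nonneg_left _ (Real.rpow_nonneg Real.pi_pos.le _)
          exact mul_le_mul_of_nonneg_left step5 (Real.rpow_nonneg hε.le _)
  calc ε ^ (2*m-1) * ((1 + ε) ^ 2 + 1 - 2 * (1 + ε) * u) ^ (-s/2)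
      ≤ ε ^ (2*m-1) * (Real.pi ^ s * (ε ^ (-s) * z ^ (-M))) :=
        mul_le_mul_of_nonneg_left hchain (pow_nonneg hε.le _)
    _ = Real.pi ^ s * ε ^ (-(d:ℝ) + 1) / z ^ M := by
        have hcast : ((2*m-1:ℕ):ℝ) = 2*(m:ℝ) - 1 := by
          rw [Nat.cast_sub (by omega : 1 ≤ 2*m)]; push_cast; ring
        have he : ε ^ (2*m-1) * ε ^ (-s) = ε ^ (-(d:ℝ) + 1) := by
          rw [← Real.rpow_natCast ε (2*m-1), ← Real.rpow_add hε, hcast]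
          congr 1; simp only [hs]; ring
        have hre : ε ^ (2*m-1) * (Real.pi ^ s * (ε ^ (-s) * z ^ (-M)))
            = (ε ^ (2*m-1) * ε ^ (-s)) * Real.pi ^ s * z ^ (-M) := by ring
        rw [hre, he, Real.rpow_neg hzpos.le, div_eq_mul_inv]
        ring

lemma Feps_ge {d m : ℕ} (hd : 2 < d) (hm : 1 ≤ m) {ε u : ℝ} (hε : 0 < ε)
    (hε1 : ε ≤ 1) (hu2 : u ≤ 1) (hucos : Real.cos ε ≤ u) :
    (3:ℝ) ^ (-(((d:ℝ)-2+2*m)/2)) * ε ^ ((1:ℝ)-(d:ℝ)) ≤ Feps d m ε u := by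
  set s : ℝ := (d:ℝ) - 2 + 2*m with hs
  have hd3 : (3:ℝ) ≤ d := by exact_mod_cast hd
  have hm1 : (1:ℝ) ≤ m := by exact_mod_cast hm
  have hspos : 0 < s := by simp only [hs]; nlinarith
  have hexp : -(d:ℝ)/2 + 1 - m = -s/2 := by simp only [hs]; ring
  rw [Feps, hexp]
  have hcos : 1 - ε^2/2 ≤ Real.cos ε := Real.one_sub_sq_div_two_le_cos
  have hQ3 : (1 + ε) ^ 2 + 1 - 2 * (1 + ε) * u ≤ 3*ε^2 := by nlinarith
  have hQ0 : 0 < (1 + ε) ^ 2 + 1 - 2 * (1 + ε) * u := by nlinarith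
  have step1 : (3*ε^2) ^ (-s/2) ≤ ((1 + ε) ^ 2 + 1 - 2 * (1 + ε) * u) ^ (-s/2) :=
    Real.rpow_le_rpow_of_nonpos hQ0 hQ3 (by linarith)
  have step2 : (3*ε^2) ^ (-s/2) = 3 ^ (-(s/2)) * ε ^ (-s) := by
    rw [Real.mul_rpow (by norm_num) (sq_nonneg ε),
      ← Real.rpow_natCast ε 2, ← Real.rpow_mul hε.le]
    rw [show (2:ℕ) * (-s/2) = -s by push_cast; ring, show -s/2 = -(s/2) by ring]
  have hcast : ((2*m-1:ℕ):ℝ) = 2*(m:ℝ) - 1 := by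
    rw [Nat.cast_sub (by omega : 1 ≤ 2*m)]; push_cast; ring
  have he : ε ^ (2*m-1) * ε ^ (-s) = ε ^ ((1:ℝ)-(d:ℝ)) := by
    rw [← Real.rpow_natCast ε (2*m-1), ← Real.rpow_add hε, hcast]
    congr 1; simp only [hs]; ring
  calc (3:ℝ) ^ (-(s/2)) * ε ^ ((1:ℝ)-(d:ℝ))
      = ε ^ (2*m-1) * ((3*ε^2) ^ (-s/2)) := by
        rw [step2, ← he]; ring
    _ ≤ ε ^ (2*m-1) * ((1 + ε) ^ 2 + 1 - 2 * (1 + ε) * u) ^ (-s/2) :=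
        mul_le_mul_of_nonneg_left step1 (pow_nonneg hε.le _)

lemma coord_le_norm {n : ℕ} (v : EuclideanSpace ℝ (Fin n)) (i : Fin n) : |v i| ≤ ‖v‖ := by
  rw [EuclideanSpace.norm_eq, ← Real.sqrt_sq_eq_abs]
  apply Real.sqrt_le_sqrt
  calc v i ^ 2 = ‖v i‖^2 := by rw [Real.norm_eq_abs, sq_abs]
    _ ≤ ∑ j, ‖v j‖^2 := Finset.single_le_sum (f := fun j => ‖v j‖^2)
        (fun j _ => sq_nonneg _) (Finset.mem_univ i)

lemma lip_equiv (n : ℕ) : LipschitzWith 1 (⇑(WithLp.equiv 2 (Fin n → ℝ)) :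
    EuclideanSpace ℝ (Fin n) → (Fin n → ℝ)) := by
  apply LipschitzWith.of_dist_le_mul
  intro x y
  simp only [NNReal.coe_one, one_mul, dist_eq_norm]
  have h : (WithLp.equiv 2 (Fin n → ℝ)) x - (WithLp.equiv 2 (Fin n → ℝ)) y
      = (WithLp.equiv 2 (Fin n → ℝ)) (x - y) := by simp
  rw [h]
  apply pi_norm_le_iff_of_nonneg (norm_nonneg _) |>.mpr
  intro i
  show ‖(x - y) i‖ ≤ ‖x - y‖
  rw [Real.norm_eq_abs]
  exact coord_le_norm _ i

lemma lip_proj {d : ℕ} (η : EuclideanSpace ℝ (Fin d)) (hη : ‖η‖ = 1) :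
    LipschitzWith 1 (fun z : EuclideanSpace ℝ (Fin d) => z - (inner ℝ z η : ℝ) • η) := by
  apply LipschitzWith.of_dist_le_mul
  intro x y
  simp only [NNReal.coe_one, one_mul, dist_eq_norm]
  have h : (x - (inner ℝ x η : ℝ) • η) - (y - (inner ℝ y η : ℝ) • η)
      = (x - y) - (inner ℝ (x - y) η : ℝ) • η := by
    rw [inner_sub_left]; push_cast; module
  rw [h]
  set z := x - y
  have hsq : ‖z - (inner ℝ z η : ℝ) • η‖^2 = ‖z‖^2 - (inner ℝ z η : ℝ)^2 := by
    rw [norm_sub_sq_real, real_inner_smul_right, norm_smul]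
    simp [hη, Real.norm_eq_abs, sq_abs]
    ring
  nlinarith [norm_nonneg (z - (inner ℝ z η : ℝ) • η), norm_nonneg z]

lemma sphere_point {d : ℕ} {η v : EuclideanSpace ℝ (Fin d)} (hη : ‖η‖ = 1)
    (hvη : (inner ℝ v η : ℝ) = 0) {ε : ℝ} (hε : 0 < ε) (hε1 : ε ≤ 1)
    (htr : ‖v‖ ≤ ε / Real.pi) :
    ∃ x : EuclideanSpace ℝ (Fin d), ‖x‖ = 1 ∧ Real.cos ε ≤ (inner ℝ x η : ℝ) ∧
      x - (inner ℝ x η : ℝ) • η = v := by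
  have hπ := Real.pi_gt_three
  set t := ‖v‖ with ht
  have ht0 : 0 ≤ t := norm_nonneg _
  have ht1 : t < 1 := lt_of_le_of_lt htr (by rw [div_lt_one (by linarith)]; linarith)
  set st := Real.sqrt (1 - t^2) with hst
  have hst0 : 0 ≤ st := Real.sqrt_nonneg _
  have hstsq : st^2 = 1 - t^2 := Real.sq_sqrt (by nlinarith)
  refine ⟨st • η + v, ?_, ?_, ?_⟩
  · have hxsq : ‖st • η + v‖^2 = 1 := by
      rw [norm_add_sq_real, real_inner_smul_left, real_inner_comm, hvη,
        norm_smul, hη, Real.norm_eq_abs, abs_of_nonneg hst0]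
      simp only [mul_one]
      nlinarith
    calc ‖st • η + v‖ = Real.sqrt (‖st • η + v‖^2) := (Real.sqrt_sq (norm_nonneg _)).symm
      _ = 1 := by rw [hxsq, Real.sqrt_one]
  · have hinner : (inner ℝ (st • η + v) η : ℝ) = st := by
      rw [inner_add_left, real_inner_smul_left, hvη, real_inner_self_eq_norm_sq, hη]
      ring
    rw [hinner]
    have h1 : Real.cos ε ≤ 1 - 2/Real.pi^2*ε^2 :=
      Real.cos_le_one_sub_mul_cos_sq (by rw [abs_of_nonneg hε.le]; linarith)
    have hπ2 : (0:ℝ) < Real.pi^2 := by positivity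
    have h2 : t^2 ≤ 2/Real.pi^2*ε^2 := by
      have hr2 : t^2 ≤ (ε/Real.pi)^2 := by nlinarith
      rw [div_pow] at hr2
      have : ε^2/Real.pi^2 ≤ 2/Real.pi^2*ε^2 := by
        rw [div_mul_eq_mul_div]
        gcongr
        nlinarith
      linarith
    have h3 : 1 - t^2 ≤ st := by
      have hst1 : st ≤ 1 := by nlinarith
      nlinarith
    linarith
  · have hinner : (inner ℝ (st • η + v) η : ℝ) = st := by
      rw [inner_add_left, real_inner_smul_left, hvη, real_inner_self_eq_norm_sq, hη]
      ring
    rw [hinner]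
    abel

lemma cap_measure {d : ℕ} (hd : 2 < d) {ε : ℝ} (hε : 0 < ε) (hε1 : ε ≤ 1)
    {η : EuclideanSpace ℝ (Fin d)} (hη : ‖η‖ = 1) :
    ENNReal.ofReal ((2 * (ε/Real.pi) / Real.sqrt ((d:ℝ)-1)) ^ (d-1)) ≤
      μH[(d:ℝ)-1] (Metric.sphere (0:EuclideanSpace ℝ (Fin d)) 1
        ∩ {x | Real.cos ε ≤ (inner ℝ x η : ℝ)}) := by
  have hπ := Real.pi_gt_three
  have hd3 : (3:ℝ) ≤ d := by exact_mod_cast hd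
  have hd1 : (0:ℝ) ≤ (d:ℝ) - 1 := by linarith
  have hncast : ((d - 1 : ℕ):ℝ) = (d:ℝ) - 1 := by
    rw [Nat.cast_sub (by omega)]; norm_num
  haveI : Fact (Module.finrank ℝ (EuclideanSpace ℝ (Fin d)) = (d-1) + 1) :=
    ⟨by rw [finrank_euclideanSpace_fin]; omega⟩
  have hη0 : η ≠ 0 := by rw [← norm_ne_zero_iff, hη]; norm_num
  have hK : Module.finrank ℝ ((ℝ ∙ η)ᗮ) = d - 1 := Submodule.finrank_orthogonal_span_singleton hη0
  let B : OrthonormalBasis (Fin (d-1)) ℝ ((ℝ ∙ η)ᗮ) :=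
    (stdOrthonormalBasis ℝ ((ℝ ∙ η)ᗮ)).reindex (finCongr hK)
  let g : EuclideanSpace ℝ (Fin (d-1)) → EuclideanSpace ℝ (Fin d) :=
    fun w => ((ℝ ∙ η)ᗮ).subtypeₗᵢ (B.repr.symm w)
  have hg : Isometry g := ((ℝ ∙ η)ᗮ).subtypeₗᵢ.isometry.comp B.repr.symm.isometry
  have hr0 : 0 < ε / Real.pi := by positivity
  have hsub : g '' Metric.closedBall 0 (ε / Real.pi) ⊆
      (fun z : EuclideanSpace ℝ (Fin d) => z - (inner ℝ z η : ℝ) • η) ''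
        (Metric.sphere (0:EuclideanSpace ℝ (Fin d)) 1
          ∩ {x | Real.cos ε ≤ (inner ℝ x η : ℝ)}) := by
    rintro _ ⟨w, hw, rfl⟩
    rw [Metric.mem_closedBall, dist_zero_right] at hw
    have hvn : ‖g w‖ = ‖w‖ := by
      have h0 : g 0 = 0 := by simp [g]
      have := hg.dist_eq w 0
      rwa [h0, dist_zero_right, dist_zero_right] at this
    have hvK : g w ∈ (ℝ ∙ η)ᗮ := (B.repr.symm w).2
    have hvη : (inner ℝ (g w) η : ℝ) = 0 :=
      Submodule.mem_orthogonal_singleton_iff_inner_left.mp hvK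
    obtain ⟨x, hx1, hx2, hx3⟩ := sphere_point hη hvη hε hε1 (by rw [hvn]; exact hw)
    exact ⟨x, ⟨by rwa [mem_sphere_zero_iff_norm], hx2⟩, hx3⟩
  have c1 : μH[(d:ℝ)-1] (Metric.closedBall (0:EuclideanSpace ℝ (Fin (d-1))) (ε/Real.pi))
      = μH[(d:ℝ)-1] (g '' Metric.closedBall 0 (ε/Real.pi)) :=
    (hg.hausdorffMeasure_image (Or.inl hd1) _).symm
  have c2 := measure_mono (μ := μH[(d:ℝ)-1]) hsub
  have c3 : μH[(d:ℝ)-1] ((fun z : EuclideanSpace ℝ (Fin d) => z - (inner ℝ z η : ℝ) • η) ''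
        (Metric.sphere (0:EuclideanSpace ℝ (Fin d)) 1
          ∩ {x | Real.cos ε ≤ (inner ℝ x η : ℝ)}))
      ≤ μH[(d:ℝ)-1] (Metric.sphere (0:EuclideanSpace ℝ (Fin d)) 1
          ∩ {x | Real.cos ε ≤ (inner ℝ x η : ℝ)}) := by
    simpa using (lip_proj η hη).hausdorffMeasure_image_le hd1 _
  have hsq : (0:ℝ) < Real.sqrt ((d:ℝ)-1) := Real.sqrt_pos.mpr (by linarith)
  have hr'0 : (0:ℝ) ≤ ε/Real.pi/Real.sqrt ((d:ℝ)-1) := by positivity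
  have c4 : ENNReal.ofReal ((2*(ε/Real.pi/Real.sqrt ((d:ℝ)-1)))^(d-1))
      ≤ μH[(d:ℝ)-1] (Metric.closedBall (0:EuclideanSpace ℝ (Fin (d-1))) (ε/Real.pi)) := by
    have hpi : (μH[(d:ℝ)-1] : Measure (Fin (d-1) → ℝ)) = volume := by
      have hcd : (d:ℝ)-1 = ((Fintype.card (Fin (d-1)) : ℕ):ℝ) := by
        rw [Fintype.card_fin, hncast]
      rw [hcd]
      exact hausdorffMeasure_pi_real
    have hsubset : Metric.closedBall (0 : Fin (d-1) → ℝ) (ε/Real.pi/Real.sqrt ((d:ℝ)-1))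
        ⊆ (⇑(WithLp.equiv 2 (Fin (d-1) → ℝ))) '' Metric.closedBall 0 (ε/Real.pi) := by
      intro y hy
      rw [Metric.mem_closedBall, dist_zero_right] at hy
      refine ⟨(WithLp.equiv 2 (Fin (d-1) → ℝ)).symm y, ?_,
        (WithLp.equiv 2 _).apply_symm_apply y⟩
      rw [Metric.mem_closedBall, dist_zero_right, EuclideanSpace.norm_eq]
      have hyc : ∀ i, ‖y i‖ ≤ ε/Real.pi/Real.sqrt ((d:ℝ)-1) :=
        fun i => (norm_le_pi_norm y i).trans hy
      have hsum : ∑ i, ‖((WithLp.equiv 2 (Fin (d-1) → ℝ)).symm y) i‖^2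
          ≤ ((d-1:ℕ):ℝ) * (ε/Real.pi/Real.sqrt ((d:ℝ)-1))^2 := by
        calc ∑ i, ‖((WithLp.equiv 2 (Fin (d-1) → ℝ)).symm y) i‖^2
            ≤ ∑ _i : Fin (d-1), (ε/Real.pi/Real.sqrt ((d:ℝ)-1))^2 := by
              apply Finset.sum_le_sum
              intro i _
              have h := hyc i
              have hcoe : ‖((WithLp.equiv 2 (Fin (d-1) → ℝ)).symm y) i‖ = ‖y i‖ := rfl
              rw [hcoe]
              nlinarith [norm_nonneg (y i)]
          _ = ((d-1:ℕ):ℝ) * (ε/Real.pi/Real.sqrt ((d:ℝ)-1))^2 := by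
              rw [Finset.sum_const, Finset.card_univ, Fintype.card_fin, nsmul_eq_mul]
      calc Real.sqrt (∑ i, ‖((WithLp.equiv 2 (Fin (d-1) → ℝ)).symm y) i‖^2)
          ≤ Real.sqrt (((d-1:ℕ):ℝ) * (ε/Real.pi/Real.sqrt ((d:ℝ)-1))^2) :=
            Real.sqrt_le_sqrt hsum
        _ = Real.sqrt ((d:ℝ)-1) * (ε/Real.pi/Real.sqrt ((d:ℝ)-1)) := by
            rw [hncast, Real.sqrt_mul (by linarith) _, Real.sqrt_sq hr'0]
        _ = ε/Real.pi := by
            rw [mul_div_cancel₀ _ hsq.ne']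
    calc ENNReal.ofReal ((2*(ε/Real.pi/Real.sqrt ((d:ℝ)-1)))^(d-1))
        = volume (Metric.closedBall (0:Fin (d-1) → ℝ) (ε/Real.pi/Real.sqrt ((d:ℝ)-1))) := by
          rw [Real.volume_pi_closedBall _ hr'0, Fintype.card_fin]
      _ = μH[(d:ℝ)-1] (Metric.closedBall (0:Fin (d-1) → ℝ)
            (ε/Real.pi/Real.sqrt ((d:ℝ)-1))) := by rw [hpi]
      _ ≤ μH[(d:ℝ)-1] ((⇑(WithLp.equiv 2 (Fin (d-1) → ℝ)))
            '' Metric.closedBall 0 (ε/Real.pi)) := measure_mono hsubset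
      _ ≤ μH[(d:ℝ)-1] (Metric.closedBall (0:EuclideanSpace ℝ (Fin (d-1))) (ε/Real.pi)) := by
          simpa using (lip_equiv (d-1)).hausdorffMeasure_image_le hd1 _
  have final : (2 * (ε/Real.pi) / Real.sqrt ((d:ℝ)-1)) ^ (d-1)
      = (2*(ε/Real.pi/Real.sqrt ((d:ℝ)-1)))^(d-1) := by
    congr 1
    ring
  rw [final]
  exact c4.trans (c1 ▸ (c2.trans c3))

end Aux

theorem stmt19 (d : ℕ) (hd : 2 < d) (M : ℝ) (hM : (d : ℝ) - 2 < M) :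
    ∃ c₁ > (0:ℝ), ∃ c₂ > (0:ℝ), ∀ ε : ℝ, 0 < ε → ε ≤ 1 →
      (∀ x ∈ Metric.sphere (0 : EuclideanSpace ℝ (Fin d)) 1,
        ∀ η ∈ Metric.sphere (0 : EuclideanSpace ℝ (Fin d)) 1,
          -- (i)
          Feps d ⌈(M - (d : ℝ) + 2) / 2⌉₊ ε (inner ℝ x η : ℝ)
              = ε ^ (2 * ⌈(M - (d : ℝ) + 2) / 2⌉₊ - 1) *
                  ‖x - (1 + ε) • η‖ ^
                    (-(d : ℝ) + 2 - 2 * (⌈(M - (d : ℝ) + 2) / 2⌉₊ : ℝ)) ∧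
          -- (ii)
          0 < Feps d ⌈(M - (d : ℝ) + 2) / 2⌉₊ ε (inner ℝ x η : ℝ) ∧
          Feps d ⌈(M - (d : ℝ) + 2) / 2⌉₊ ε (inner ℝ x η : ℝ)
              ≤ c₁ * ε ^ (-(d : ℝ) + 1) / (1 + ε⁻¹ * geodist x η) ^ M) ∧
      -- (iii)
      (∀ η ∈ Metric.sphere (0 : EuclideanSpace ℝ (Fin d)) 1,
        ENNReal.ofReal c₂ ≤
          ∫⁻ x in Metric.sphere (0 : EuclideanSpace ℝ (Fin d)) 1,
            ENNReal.ofReal (Feps d ⌈(M - (d : ℝ) + 2) / 2⌉₊ ε (inner ℝ x η : ℝ))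
            ∂(Measure.hausdorffMeasure ((d : ℝ) - 1))) := by
  set m : ℕ := ⌈(M - (d : ℝ) + 2) / 2⌉₊ with hmdef
  have hd3 : (3:ℝ) ≤ d := by exact_mod_cast hd
  have hM0 : 0 < M := by linarith
  have hm : 1 ≤ m := Nat.ceil_pos.mpr (by linarith)
  have hMs : M ≤ (d:ℝ) - 2 + 2*m := by
    have := Nat.le_ceil ((M - (d : ℝ) + 2) / 2)
    rw [← hmdef] at this
    linarith
  have hd1 : (0:ℝ) ≤ (d:ℝ) - 1 := by linarith
  refine ⟨Real.pi ^ ((d:ℝ) - 2 + 2*(m:ℝ)),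
    Real.rpow_pos_of_pos Real.pi_pos _,
    (3:ℝ) ^ (-(((d:ℝ)-2+2*(m:ℝ))/2)) * (2 / (Real.pi * Real.sqrt ((d:ℝ)-1)))^(d-1),
    ?_, ?_⟩
  · have hsq : (0:ℝ) < Real.sqrt ((d:ℝ)-1) := Real.sqrt_pos.mpr (by linarith)
    exact mul_pos (Real.rpow_pos_of_pos (by norm_num) _)
      (pow_pos (div_pos (by norm_num) (mul_pos Real.pi_pos hsq)) _)
  intro ε hε hε1
  constructor
  · intro x hx η hη
    have hx' : ‖x‖ = 1 := mem_sphere_zero_iff_norm.mp hx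
    have hη' : ‖η‖ = 1 := mem_sphere_zero_iff_norm.mp hη
    have habs : |(inner ℝ x η : ℝ)| ≤ 1 := by
      have := abs_real_inner_le_norm x η
      rwa [hx', hη', mul_one] at this
    have hu1 : -1 ≤ (inner ℝ x η : ℝ) := neg_le_of_abs_le habs
    have hu2 : (inner ℝ x η : ℝ) ≤ 1 := le_of_abs_le habs
    refine ⟨Feps_eq hε hx' hη', Feps_pos hε hu2, ?_⟩
    exact Feps_le hd hm hM0 hMs hε hε1 hu1 hu2
  · intro η hη
    have hη' : ‖η‖ = 1 := mem_sphere_zero_iff_norm.mp hη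
    set Scap := Metric.sphere (0:EuclideanSpace ℝ (Fin d)) 1
      ∩ {x | Real.cos ε ≤ (inner ℝ x η : ℝ)} with hScap
    have hmeas : MeasurableSet Scap :=
      (Metric.isClosed_sphere.measurableSet).inter
        ((isClosed_le continuous_const
          (Continuous.inner continuous_id continuous_const)).measurableSet)
    set C : ℝ := (3:ℝ) ^ (-(((d:ℝ)-2+2*(m:ℝ))/2)) * ε ^ ((1:ℝ)-(d:ℝ)) with hC
    have hlow : ∀ x ∈ Scap, ENNReal.ofReal C
        ≤ ENNReal.ofReal (Feps d m ε (inner ℝ x η : ℝ)) := by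
      intro x hx
      apply ENNReal.ofReal_le_ofReal
      have hx' : ‖x‖ = 1 := mem_sphere_zero_iff_norm.mp hx.1
      have habs : |(inner ℝ x η : ℝ)| ≤ 1 := by
        have := abs_real_inner_le_norm x η
        rwa [hx', hη', mul_one] at this
      exact Feps_ge hd hm hε hε1 (le_of_abs_le habs) hx.2
    calc ENNReal.ofReal ((3:ℝ) ^ (-(((d:ℝ)-2+2*(m:ℝ))/2))
            * (2 / (Real.pi * Real.sqrt ((d:ℝ)-1)))^(d-1))
        ≤ ENNReal.ofReal C
            * ENNReal.ofReal ((2 * (ε/Real.pi) / Real.sqrt ((d:ℝ)-1)) ^ (d-1)) := by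
          have hball : (2 * (ε/Real.pi) / Real.sqrt ((d:ℝ)-1)) ^ (d-1)
              = (2 / (Real.pi * Real.sqrt ((d:ℝ)-1)))^(d-1) * ε ^ (d-1) := by
            rw [← mul_pow]
            congr 1
            field_simp
          have hεpow : ε ^ ((1:ℝ)-(d:ℝ)) * ε ^ (d-1 : ℕ) = 1 := by
            rw [← Real.rpow_natCast ε (d-1), ← Real.rpow_add hε,
              Nat.cast_sub (by omega : 1 ≤ d)]
            norm_num
          have heq : (3:ℝ) ^ (-(((d:ℝ)-2+2*(m:ℝ))/2))
              * (2 / (Real.pi * Real.sqrt ((d:ℝ)-1)))^(d-1)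
              = C * (2 * (ε/Real.pi) / Real.sqrt ((d:ℝ)-1)) ^ (d-1) := by
            rw [hC, hball]
            have hre : (3:ℝ) ^ (-(((d:ℝ)-2+2*(m:ℝ))/2)) * ε ^ ((1:ℝ)-(d:ℝ)) *
                ((2 / (Real.pi * Real.sqrt ((d:ℝ)-1)))^(d-1) * ε ^ (d-1 : ℕ))
                = (3:ℝ) ^ (-(((d:ℝ)-2+2*(m:ℝ))/2))
                  * (2 / (Real.pi * Real.sqrt ((d:ℝ)-1)))^(d-1)
                  * (ε ^ ((1:ℝ)-(d:ℝ)) * ε ^ (d-1 : ℕ)) := by ring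
            rw [hre, hεpow, mul_one]
          rw [← ENNReal.ofReal_mul (by positivity), heq]
      _ ≤ ENNReal.ofReal C * μH[(d:ℝ)-1] Scap :=
          mul_le_mul_right (cap_measure hd hε hε1 hη') _
      _ = ∫⁻ _x in Scap, ENNReal.ofReal C ∂(μH[(d:ℝ)-1]) := by
          rw [setLIntegral_const]
      _ ≤ ∫⁻ x in Scap, ENNReal.ofReal (Feps d m ε (inner ℝ x η : ℝ)) ∂(μH[(d:ℝ)-1]) :=
          setLIntegral_mono' hmeas hlow
      _ ≤ ∫⁻ x in Metric.sphere (0 : EuclideanSpace ℝ (Fin d)) 1,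
            ENNReal.ofReal (Feps d m ε (inner ℝ x η : ℝ)) ∂(μH[(d:ℝ)-1]) :=
          lintegral_mono' (Measure.restrict_mono Set.inter_subset_left le_rfl) le_rfl
end
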